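/- Let F be the Minkowskian product of Finsler metrics F₁ and F₂ with respect to a product function f. Then at every point (x,y) = ((x₁,x₂),(y₁,y₂)) with y₁ ≠ 0 and y₂ ≠ 0, the mean Berwald curvature E_{βγ} = ½·B^α_{βγα} (sum over α) of F satisfies: E_{ij}(x,y) = E₁_{ij}(x₁,y₁), E_{i'j'}(x,y) = E₂_{i'j'}(x₂,y₂), and E_{i'j}(x,y) = E_{ij'}(x,y) = 0, where E₁ and E₂ are the mean Berwald curvatures of F₁ and F₂. -/

import Mathlib

open Matrix

/-- Partial derivative in the fiber variable `y` in the direction of the `α`-th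
coordinate, for a function `g (x, y)` of a base point and a fiber vector. -/
noncomputable def pdy {ι : Type*} [Fintype ι] [DecidableEq ι]
    (g : (ι → ℝ) → (ι → ℝ) → ℝ) (α : ι) : (ι → ℝ) → (ι → ℝ) → ℝ :=
  fun x y => fderiv ℝ (g x) y (Pi.single α 1)

/-- Partial derivative in the base variable `x` in the direction of the `γ`-th
coordinate, for a function `g (x, y)` of a base point and a fiber vector. -/
noncomputable def pdx {ι : Type*} [Fintype ι] [DecidableEq ι]
    (g : (ι → ℝ) → (ι → ℝ) → ℝ) (γ : ι) : (ι → ℝ) → (ι → ℝ) → ℝ :=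
  fun x y => fderiv ℝ (fun x' => g x' y) x (Pi.single γ 1)

/-- The fundamental tensor `(G_{αβ}) = (∂²(F²)/∂y^α∂y^β)` of a Finsler metric `F`. -/
noncomputable def fundTensor {ι : Type*} [Fintype ι] [DecidableEq ι]
    (F : (ι → ℝ) → (ι → ℝ) → ℝ) (x y : ι → ℝ) : Matrix ι ι ℝ :=
  fun α β => pdy (pdy (fun x' y' => (F x' y') ^ 2) β) α x y

/-- `F` is a Finsler metric on the open set `U`: `G = F²` is smooth on the slit
domain, `F` is positive for `y ≠ 0`, absolutely 1-homogeneous in `y`, and its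
fundamental tensor is positive definite for `y ≠ 0`. -/
structure IsFinslerMetric {ι : Type*} [Fintype ι] [DecidableEq ι]
    (U : Set (ι → ℝ)) (F : (ι → ℝ) → (ι → ℝ) → ℝ) : Prop where
  isOpen : IsOpen U
  smooth : ContDiffOn ℝ (⊤ : ℕ∞) (fun p : (ι → ℝ) × (ι → ℝ) => (F p.1 p.2) ^ 2)
    (U ×ˢ {y | y ≠ 0})
  pos : ∀ x ∈ U, ∀ y : ι → ℝ, y ≠ 0 → 0 < F x y
  homog : ∀ x ∈ U, ∀ (y : ι → ℝ) (c : ℝ), F x (c • y) = |c| * F x y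
  posDef : ∀ x ∈ U, ∀ y : ι → ℝ, y ≠ 0 → (fundTensor F x y).PosDef

/-- The geodesic spray coefficients
`𝔾^α = ½ G^{αβ}(∂²G/∂y^β∂x^γ · y^γ − ∂G/∂x^β)` of a Finsler metric `F`. -/
noncomputable def spray {ι : Type*} [Fintype ι] [DecidableEq ι]
    (F : (ι → ℝ) → (ι → ℝ) → ℝ) (α : ι) : (ι → ℝ) → (ι → ℝ) → ℝ :=
  fun x y => (1 / 2) * ∑ β, (fundTensor F x y)⁻¹ α β *
    ((∑ γ, pdx (pdy (fun x' y' => (F x' y') ^ 2) β) γ x y * y γ) -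
      pdx (fun x' y' => (F x' y') ^ 2) β x y)

/-- The Cartan nonlinear connection coefficients `Γ^α_β = ∂𝔾^α/∂y^β`. -/
noncomputable def nonlinConn {ι : Type*} [Fintype ι] [DecidableEq ι]
    (F : (ι → ℝ) → (ι → ℝ) → ℝ) (α β : ι) : (ι → ℝ) → (ι → ℝ) → ℝ :=
  pdy (spray F α) β

/-- The Berwald connection coefficients `Γ̌^α_{β;γ} = ∂Γ^α_γ/∂y^β = ∂²𝔾^α/∂y^β∂y^γ`. -/
noncomputable def berwaldConn {ι : Type*} [Fintype ι] [DecidableEq ι]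
    (F : (ι → ℝ) → (ι → ℝ) → ℝ) (α β γ : ι) : (ι → ℝ) → (ι → ℝ) → ℝ :=
  pdy (nonlinConn F α γ) β

/-- The Berwald curvature `B^α_{βγη} = ∂³𝔾^α/∂y^β∂y^γ∂y^η`. -/
noncomputable def berwaldCurv {ι : Type*} [Fintype ι] [DecidableEq ι]
    (F : (ι → ℝ) → (ι → ℝ) → ℝ) (α β γ η : ι) : (ι → ℝ) → (ι → ℝ) → ℝ :=
  pdy (pdy (pdy (spray F α) η) γ) β

/-- The mean Berwald curvature `E_{βγ} = ½ B^α_{βγα}` (sum over `α`). -/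
noncomputable def meanBerwaldCurv {ι : Type*} [Fintype ι] [DecidableEq ι]
    (F : (ι → ℝ) → (ι → ℝ) → ℝ) (β γ : ι) : (ι → ℝ) → (ι → ℝ) → ℝ :=
  fun x y => (1 / 2) * ∑ α, berwaldCurv F α β γ α x y

/-- The Landsberg curvature `L_{βγη} = −¼ y^ν G_{να} B^α_{βγη}` (sums over `ν, α`). -/
noncomputable def landsbergCurv {ι : Type*} [Fintype ι] [DecidableEq ι]
    (F : (ι → ℝ) → (ι → ℝ) → ℝ) (β γ η : ι) : (ι → ℝ) → (ι → ℝ) → ℝ :=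
  fun x y => -(1 / 4) * ∑ ν, ∑ α, y ν * fundTensor F x y ν α * berwaldCurv F α β γ η x y

/-- The mean Landsberg curvature `J_α = 2 G^{βγ} L_{αβγ}` (sums over `β, γ`). -/
noncomputable def meanLandsbergCurv {ι : Type*} [Fintype ι] [DecidableEq ι]
    (F : (ι → ℝ) → (ι → ℝ) → ℝ) (α : ι) : (ι → ℝ) → (ι → ℝ) → ℝ :=
  fun x y => 2 * ∑ β, ∑ γ, (fundTensor F x y)⁻¹ β γ * landsbergCurv F α β γ x y

/-- Partial derivative of `f : ℝ → ℝ → ℝ` with respect to the first variable. -/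
noncomputable def pderivS (f : ℝ → ℝ → ℝ) (s t : ℝ) : ℝ := deriv (fun u => f u t) s

/-- Partial derivative of `f : ℝ → ℝ → ℝ` with respect to the second variable. -/
noncomputable def pderivT (f : ℝ → ℝ → ℝ) (s t : ℝ) : ℝ := deriv (fun v => f s v) t

/-- `f_st = ∂²f/∂s∂t`. -/
noncomputable def pderivST (f : ℝ → ℝ → ℝ) (s t : ℝ) : ℝ :=
  deriv (fun u => pderivT f u t) s

/-- The data of a Minkowskian product: `F₁, F₂` are Finsler metrics on `U₁, U₂`,
`f` is an admissible product function, and `F = √(f(F₁², F₂²))` is the Minkowskian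
product metric, itself assumed to be a Finsler metric on `U₁ × U₂`. -/
structure IsMinkowskianProduct {m n : ℕ}
    (U₁ : Set (Fin m → ℝ)) (U₂ : Set (Fin n → ℝ))
    (F₁ : (Fin m → ℝ) → (Fin m → ℝ) → ℝ) (F₂ : (Fin n → ℝ) → (Fin n → ℝ) → ℝ)
    (f : ℝ → ℝ → ℝ)
    (F : (Fin m ⊕ Fin n → ℝ) → (Fin m ⊕ Fin n → ℝ) → ℝ) : Prop where
  finsler₁ : IsFinslerMetric U₁ F₁
  finsler₂ : IsFinslerMetric U₂ F₂
  f_cont : ContinuousOn (fun p : ℝ × ℝ => f p.1 p.2) (Set.Ici 0 ×ˢ Set.Ici 0)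
  f_nonneg : ∀ s ∈ Set.Ici (0 : ℝ), ∀ t ∈ Set.Ici (0 : ℝ), 0 ≤ f s t
  f_zero_iff : ∀ s ∈ Set.Ici (0 : ℝ), ∀ t ∈ Set.Ici (0 : ℝ),
    (f s t = 0 ↔ s = 0 ∧ t = 0)
  f_homog : ∀ c ∈ Set.Ici (0 : ℝ), ∀ s ∈ Set.Ici (0 : ℝ), ∀ t ∈ Set.Ici (0 : ℝ),
    f (c * s) (c * t) = c * f s t
  f_smooth : ContDiffOn ℝ (⊤ : ℕ∞) (fun p : ℝ × ℝ => f p.1 p.2)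
    (Set.Ioi 0 ×ˢ Set.Ioi 0)
  fs_ne : ∀ s > (0 : ℝ), ∀ t > (0 : ℝ), pderivS f s t ≠ 0
  ft_ne : ∀ s > (0 : ℝ), ∀ t > (0 : ℝ), pderivT f s t ≠ 0
  delta_ne : ∀ s > (0 : ℝ), ∀ t > (0 : ℝ),
    pderivS f s t * pderivT f s t - 2 * f s t * pderivST f s t ≠ 0
  F_def : ∀ (x y : Fin m ⊕ Fin n → ℝ),
    F x y = Real.sqrt (f ((F₁ (x ∘ Sum.inl) (y ∘ Sum.inl)) ^ 2)
      ((F₂ (x ∘ Sum.inr) (y ∘ Sum.inr)) ^ 2))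
  finsler : IsFinslerMetric
    {x : Fin m ⊕ Fin n → ℝ | (x ∘ Sum.inl) ∈ U₁ ∧ (x ∘ Sum.inr) ∈ U₂} F


set_option linter.unusedSectionVars false
section Generic

open Function Filter

variable {ι : Type*} [Fintype ι] [DecidableEq ι]

/-- Joint smoothness of `pdy g α`. -/
lemma contDiffAt_pdy {g : (ι → ℝ) → (ι → ℝ) → ℝ} {x y : ι → ℝ}
    (hg : ContDiffAt ℝ (⊤:ℕ∞) (fun p : (ι → ℝ) × (ι → ℝ) => g p.1 p.2) (x, y)) (α : ι) :
    ContDiffAt ℝ (⊤:ℕ∞) (fun p : (ι → ℝ) × (ι → ℝ) => pdy g α p.1 p.2) (x, y) := by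
  have h1 : ContDiffAt ℝ (⊤:ℕ∞) (fun p : (ι → ℝ) × (ι → ℝ) => fderiv ℝ (g p.1) p.2) (x, y) := by
    apply ContDiffAt.fderiv (f := fun (p : (ι → ℝ) × (ι → ℝ)) y' => g p.1 y') (g := Prod.snd)
      (n := (⊤:ℕ∞))
    · exact hg.comp ((x, y), y)
        (((contDiffAt_fst.comp _ contDiffAt_fst)).prodMk contDiffAt_snd)
    · exact contDiffAt_snd
    · simp
  exact h1.clm_apply contDiffAt_const

/-- Joint smoothness of `pdx g γ`. -/
lemma contDiffAt_pdx {g : (ι → ℝ) → (ι → ℝ) → ℝ} {x y : ι → ℝ}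
    (hg : ContDiffAt ℝ (⊤:ℕ∞) (fun p : (ι → ℝ) × (ι → ℝ) => g p.1 p.2) (x, y)) (γ : ι) :
    ContDiffAt ℝ (⊤:ℕ∞) (fun p : (ι → ℝ) × (ι → ℝ) => pdx g γ p.1 p.2) (x, y) := by
  have h1 : ContDiffAt ℝ (⊤:ℕ∞)
      (fun p : (ι → ℝ) × (ι → ℝ) => fderiv ℝ (fun x' => g x' p.2) p.1) (x, y) := by
    apply ContDiffAt.fderiv (f := fun (p : (ι → ℝ) × (ι → ℝ)) x' => g x' p.2) (g := Prod.fst)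
      (n := (⊤:ℕ∞))
    · exact hg.comp ((x, y), x)
        (contDiffAt_snd.prodMk ((contDiffAt_snd.comp _ contDiffAt_fst)))
    · exact contDiffAt_fst
    · simp
  exact h1.clm_apply contDiffAt_const

/-- Section in `y` of a jointly smooth function is smooth. -/
lemma ContDiffAt.sectY {g : (ι → ℝ) → (ι → ℝ) → ℝ} {x y : ι → ℝ}
    (hg : ContDiffAt ℝ (⊤:ℕ∞) (fun p : (ι → ℝ) × (ι → ℝ) => g p.1 p.2) (x, y)) :
    ContDiffAt ℝ (⊤:ℕ∞) (g x) y :=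
  hg.comp y (contDiffAt_const.prodMk contDiffAt_id)

lemma ContDiffAt.sectX {g : (ι → ℝ) → (ι → ℝ) → ℝ} {x y : ι → ℝ}
    (hg : ContDiffAt ℝ (⊤:ℕ∞) (fun p : (ι → ℝ) × (ι → ℝ) => g p.1 p.2) (x, y)) :
    ContDiffAt ℝ (⊤:ℕ∞) (fun x' => g x' y) x :=
  hg.comp x (contDiffAt_id.prodMk contDiffAt_const)

lemma ContDiffAt.diffY {g : (ι → ℝ) → (ι → ℝ) → ℝ} {x y : ι → ℝ}
    (hg : ContDiffAt ℝ (⊤:ℕ∞) (fun p : (ι → ℝ) × (ι → ℝ) => g p.1 p.2) (x, y)) :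
    DifferentiableAt ℝ (g x) y :=
  hg.sectY.differentiableAt (by simp)

lemma ContDiffAt.diffX {g : (ι → ℝ) → (ι → ℝ) → ℝ} {x y : ι → ℝ}
    (hg : ContDiffAt ℝ (⊤:ℕ∞) (fun p : (ι → ℝ) × (ι → ℝ) => g p.1 p.2) (x, y)) :
    DifferentiableAt ℝ (fun x' => g x' y) x :=
  hg.sectX.differentiableAt (by simp)

/-- `pdy` only depends on the local behaviour of the function. -/
lemma pdy_congr {u v : (ι → ℝ) → (ι → ℝ) → ℝ} {x y : ι → ℝ} (α : ι)
    (h : ∀ᶠ p in nhds ((x, y) : (ι → ℝ) × (ι → ℝ)), u p.1 p.2 = v p.1 p.2) :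
    pdy u α x y = pdy v α x y := by
  have hy : ∀ᶠ y' in nhds y, u x y' = v x y' := by
    have hc : ContinuousAt (fun y' => ((x, y') : (ι → ℝ) × (ι → ℝ))) y :=
      (continuousAt_const.prodMk continuousAt_id)
    exact hc.eventually h
  unfold pdy
  rw [Filter.EventuallyEq.fderiv_eq hy]

lemma pdx_congr {u v : (ι → ℝ) → (ι → ℝ) → ℝ} {x y : ι → ℝ} (γ : ι)
    (h : ∀ᶠ p in nhds ((x, y) : (ι → ℝ) × (ι → ℝ)), u p.1 p.2 = v p.1 p.2) :
    pdx u γ x y = pdx v γ x y := by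
  have hx : ∀ᶠ x' in nhds x, u x' y = v x' y := by
    have hc : ContinuousAt (fun x' => ((x', y) : (ι → ℝ) × (ι → ℝ))) x :=
      (continuousAt_id.prodMk continuousAt_const)
    exact hc.eventually h
  unfold pdx
  rw [Filter.EventuallyEq.fderiv_eq hx]

/-- Expansion of a directional derivative in coordinate directions. -/
lemma fderiv_apply_eq_sum {u : (ι → ℝ) → ℝ} {y v : ι → ℝ} (hu : DifferentiableAt ℝ u y) :
    fderiv ℝ u y v = ∑ b, v b * fderiv ℝ u y (Pi.single b 1) := by
  have hv : v = ∑ b, v b • (Pi.single b 1 : ι → ℝ) := by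
    funext i; simp [Pi.single_apply]
  conv_lhs => rw [hv]
  rw [map_sum]
  congr 1; funext b
  rw [(fderiv ℝ u y).map_smul]
  rfl

/-- Euler-type identity: if `u` is locally `d`-homogeneous along the ray through `y`,
then `Du(y) y = d * u y`. -/
lemma euler_identity {u : (ι → ℝ) → ℝ} {y : ι → ℝ} {d : ℕ}
    (hu : DifferentiableAt ℝ u y)
    (hhom : ∀ᶠ c in nhds (1:ℝ), u (c • y) = c ^ d * u y) :
    fderiv ℝ u y y = d * u y := by
  have hc : HasDerivAt (fun c : ℝ => c • y) ((1:ℝ) • y) 1 := by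
    simpa using (hasDerivAt_id (1:ℝ)).smul_const y
  have h1 : HasDerivAt (fun c : ℝ => u (c • y)) (fderiv ℝ u y y) 1 := by
    have hu' : HasFDerivAt u (fderiv ℝ u y) ((1:ℝ) • y) := by
      rw [one_smul]; exact hu.hasFDerivAt
    have := hu'.comp_hasDerivAt 1 hc
    simpa [Function.comp_def] using this
  have h2 : deriv (fun c : ℝ => u (c • y)) 1 = deriv (fun c : ℝ => c ^ d * u y) 1 :=
    Filter.EventuallyEq.deriv_eq hhom
  have h3 : deriv (fun c : ℝ => c ^ d * u y) 1 = d * u y := by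
    have : HasDerivAt (fun c : ℝ => c ^ d * u y) ((d * (1:ℝ) ^ (d - 1)) * u y) 1 :=
      (hasDerivAt_pow d 1).mul_const (u y)
    simp [this.deriv]
  rw [← h1.deriv, h2, h3]

end Generic
section TwoVar

open Function Filter

lemma two_le_inftyN : (2 : WithTop ℕ∞) ≤ ((⊤:ℕ∞) : WithTop ℕ∞) := by
  rw [show ((2:WithTop ℕ∞)) = ((2:ℕ∞) : WithTop ℕ∞) from rfl]
  exact_mod_cast le_top

/-- Directional derivative of a two-variable function expanded in partials. -/
lemma fderiv_two_apply {φ : ℝ → ℝ → ℝ} {s t : ℝ}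
    (hφ : DifferentiableAt ℝ (fun p : ℝ × ℝ => φ p.1 p.2) (s, t)) (u v : ℝ) :
    fderiv ℝ (fun p : ℝ × ℝ => φ p.1 p.2) (s, t) (u, v) =
      u * pderivS φ s t + v * pderivT φ s t := by
  set Φ := fun p : ℝ × ℝ => φ p.1 p.2 with hΦ
  have hS : HasDerivAt (fun a => φ a t) (fderiv ℝ Φ (s, t) (1, 0)) s := by
    have h := hφ.hasFDerivAt.comp_hasDerivAt s
      ((hasDerivAt_id s).prodMk (hasDerivAt_const s t))
    simpa [Function.comp_def] using h
  have hT : HasDerivAt (fun b => φ s b) (fderiv ℝ Φ (s, t) (0, 1)) t := by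
    have h := hφ.hasFDerivAt.comp_hasDerivAt t
      ((hasDerivAt_const t s).prodMk (hasDerivAt_id t))
    simpa [Function.comp_def] using h
  have hs : pderivS φ s t = fderiv ℝ Φ (s, t) (1, 0) := hS.deriv
  have ht : pderivT φ s t = fderiv ℝ Φ (s, t) (0, 1) := hT.deriv
  have huv : ((u, v) : ℝ × ℝ) = u • ((1:ℝ), (0:ℝ)) + v • ((0:ℝ), (1:ℝ)) := by
    simp [Prod.ext_iff]
  rw [hs, ht, huv, map_add, (fderiv ℝ Φ (s, t)).map_smul, (fderiv ℝ Φ (s, t)).map_smul]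
  simp [smul_eq_mul]

lemma contDiffAt_pderivS {φ : ℝ → ℝ → ℝ} {s t : ℝ}
    (hφ : ContDiffAt ℝ (⊤:ℕ∞) (fun p : ℝ × ℝ => φ p.1 p.2) (s, t)) :
    ContDiffAt ℝ (⊤:ℕ∞) (fun p : ℝ × ℝ => pderivS φ p.1 p.2) (s, t) := by
  have heq : (fun p : ℝ × ℝ => pderivS φ p.1 p.2) =
      fun p : ℝ × ℝ => fderiv ℝ (fun u => φ u p.2) p.1 1 := by
    funext p; rw [pderivS, ← fderiv_apply_one_eq_deriv]
  rw [heq]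
  have h1 : ContDiffAt ℝ (⊤:ℕ∞) (fun p : ℝ × ℝ => fderiv ℝ (fun u => φ u p.2) p.1) (s, t) := by
    apply ContDiffAt.fderiv (f := fun (p : ℝ × ℝ) u => φ u p.2) (g := Prod.fst) (n := (⊤:ℕ∞))
    · exact hφ.comp ((s, t), s)
        (contDiffAt_snd.prodMk (contDiffAt_snd.comp _ contDiffAt_fst))
    · exact contDiffAt_fst
    · simp
  exact h1.clm_apply contDiffAt_const

lemma contDiffAt_pderivT {φ : ℝ → ℝ → ℝ} {s t : ℝ}
    (hφ : ContDiffAt ℝ (⊤:ℕ∞) (fun p : ℝ × ℝ => φ p.1 p.2) (s, t)) :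
    ContDiffAt ℝ (⊤:ℕ∞) (fun p : ℝ × ℝ => pderivT φ p.1 p.2) (s, t) := by
  have heq : (fun p : ℝ × ℝ => pderivT φ p.1 p.2) =
      fun p : ℝ × ℝ => fderiv ℝ (fun v => φ p.1 v) p.2 1 := by
    funext p; rw [pderivT, ← fderiv_apply_one_eq_deriv]
  rw [heq]
  have h1 : ContDiffAt ℝ (⊤:ℕ∞) (fun p : ℝ × ℝ => fderiv ℝ (fun v => φ p.1 v) p.2) (s, t) := by
    apply ContDiffAt.fderiv (f := fun (p : ℝ × ℝ) v => φ p.1 v) (g := Prod.snd) (n := (⊤:ℕ∞))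
    · exact hφ.comp ((s, t), t)
        ((contDiffAt_fst.comp _ contDiffAt_fst).prodMk contDiffAt_snd)
    · exact contDiffAt_snd
    · simp
  exact h1.clm_apply contDiffAt_const

/-- Symmetry of second partial derivatives for a `C^∞` two-variable function. -/
lemma pderiv_comm {φ : ℝ → ℝ → ℝ} {s t : ℝ}
    (hφ : ContDiffAt ℝ (⊤:ℕ∞) (fun p : ℝ × ℝ => φ p.1 p.2) (s, t)) :
    pderivT (fun a b => pderivS φ a b) s t = pderivS (fun a b => pderivT φ a b) s t := by
  set Φ := fun p : ℝ × ℝ => φ p.1 p.2 with hΦdef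
  -- locally, partials are the full fderiv applied to basis vectors
  have hev : ∀ᶠ p in nhds ((s, t) : ℝ × ℝ), ContDiffAt ℝ 2 Φ p := by
    exact (hφ.of_le two_le_inftyN).eventually (by simp)
  have hSloc : ∀ᶠ p in nhds ((s, t) : ℝ × ℝ), pderivS φ p.1 p.2 = fderiv ℝ Φ p (1, 0) := by
    filter_upwards [hev] with p hp
    have h := (hp.differentiableAt (by norm_num)).hasFDerivAt.comp_hasDerivAt p.1
      ((hasDerivAt_id p.1).prodMk (hasDerivAt_const p.1 p.2))
    have h' : HasDerivAt (fun a => φ a p.2) (fderiv ℝ Φ p (1, 0)) p.1 := by simpa [Function.comp_def] using h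
    exact h'.deriv
  have hTloc : ∀ᶠ p in nhds ((s, t) : ℝ × ℝ), pderivT φ p.1 p.2 = fderiv ℝ Φ p (0, 1) := by
    filter_upwards [hev] with p hp
    have h := (hp.differentiableAt (by norm_num)).hasFDerivAt.comp_hasDerivAt p.2
      ((hasDerivAt_const p.2 p.1).prodMk (hasDerivAt_id p.2))
    have h' : HasDerivAt (fun b => φ p.1 b) (fderiv ℝ Φ p (0, 1)) p.2 := by simpa [Function.comp_def] using h
    exact h'.deriv
  -- the derivative of `fderiv Φ`
  have hD : ContDiffAt ℝ (⊤:ℕ∞) (fderiv ℝ Φ) (s, t) := by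
    have := hφ.fderiv_right (m := (⊤:ℕ∞)) (by simp)
    exact this
  have hDdiff : DifferentiableAt ℝ (fderiv ℝ Φ) (s, t) := hD.differentiableAt (by simp)
  -- LHS
  have hL : pderivT (fun a b => pderivS φ a b) s t =
      (fderiv ℝ (fderiv ℝ Φ) (s, t) (0, 1)) (1, 0) := by
    have hev' : (fun b => pderivS φ s b) =ᶠ[nhds t] fun b => fderiv ℝ Φ (s, b) (1, 0) := by
      have hc : ContinuousAt (fun b => ((s, b) : ℝ × ℝ)) t :=
        continuousAt_const.prodMk continuousAt_id
      filter_upwards [hc.eventually hSloc] with b hb using hb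
    have h1 : HasDerivAt (fun b => fderiv ℝ Φ (s, b)) (fderiv ℝ (fderiv ℝ Φ) (s, t) (0, 1)) t := by
      have h := hDdiff.hasFDerivAt.comp_hasDerivAt t
        ((hasDerivAt_const t s).prodMk (hasDerivAt_id t))
      simpa [Function.comp_def] using h
    have h2 : HasDerivAt (fun b => fderiv ℝ Φ (s, b) (1, 0))
        ((fderiv ℝ (fderiv ℝ Φ) (s, t) (0, 1)) (1, 0)) t := by
      have := h1.clm_apply (hasDerivAt_const t ((1:ℝ), (0:ℝ)))
      simpa using this
    rw [pderivT, Filter.EventuallyEq.deriv_eq hev', h2.deriv]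
  -- RHS
  have hR : pderivS (fun a b => pderivT φ a b) s t =
      (fderiv ℝ (fderiv ℝ Φ) (s, t) (1, 0)) (0, 1) := by
    have hev' : (fun a => pderivT φ a t) =ᶠ[nhds s] fun a => fderiv ℝ Φ (a, t) (0, 1) := by
      have hc : ContinuousAt (fun a => ((a, t) : ℝ × ℝ)) s :=
        continuousAt_id.prodMk continuousAt_const
      filter_upwards [hc.eventually hTloc] with a ha using ha
    have h1 : HasDerivAt (fun a => fderiv ℝ Φ (a, t)) (fderiv ℝ (fderiv ℝ Φ) (s, t) (1, 0)) s := by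
      have h := hDdiff.hasFDerivAt.comp_hasDerivAt s
        ((hasDerivAt_id s).prodMk (hasDerivAt_const s t))
      simpa [Function.comp_def] using h
    have h2 : HasDerivAt (fun a => fderiv ℝ Φ (a, t) (0, 1))
        ((fderiv ℝ (fderiv ℝ Φ) (s, t) (1, 0)) (0, 1)) s := by
      have := h1.clm_apply (hasDerivAt_const s ((0:ℝ), (1:ℝ)))
      simpa using this
    rw [pderivS, Filter.EventuallyEq.deriv_eq hev', h2.deriv]
  rw [hL, hR]
  exact (hφ.isSymmSndFDerivAt (by rw [minSmoothness_of_isRCLikeNormedField]; exact two_le_inftyN)).eq _ _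

end TwoVar
section MatrixSmooth

open Function Filter

variable {ι : Type*} [Fintype ι] [DecidableEq ι]
variable {E : Type*} [NormedAddCommGroup E] [NormedSpace ℝ E]

lemma contDiffAt_matrix_det {M : E → Matrix ι ι ℝ} {q : E}
    (hM : ∀ a b, ContDiffAt ℝ (⊤:ℕ∞) (fun p => M p a b) q) :
    ContDiffAt ℝ (⊤:ℕ∞) (fun p => (M p).det) q := by
  have : (fun p => (M p).det) =
      fun p => ∑ σ : Equiv.Perm ι, ((Equiv.Perm.sign σ : ℤ) : ℝ) * ∏ i, M p (σ i) i := by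
    funext p
    rw [Matrix.det_apply]
    simp [Units.smul_def, zsmul_eq_mul]
  rw [this]
  apply ContDiffAt.sum
  intro σ _
  exact contDiffAt_const.mul (contDiffAt_prod fun i _ => hM (σ i) i)

lemma contDiffAt_matrix_adjugate {M : E → Matrix ι ι ℝ} {q : E}
    (hM : ∀ a b, ContDiffAt ℝ (⊤:ℕ∞) (fun p => M p a b) q) (a b : ι) :
    ContDiffAt ℝ (⊤:ℕ∞) (fun p => (M p).adjugate a b) q := by
  have : (fun p => (M p).adjugate a b) =
      fun p => ((M p).updateRow b (Pi.single a 1)).det := by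
    funext p; rw [Matrix.adjugate_apply]
  rw [this]
  apply contDiffAt_matrix_det
  intro k l
  by_cases hk : k = b
  · simp only [hk, Matrix.updateRow_self]
    exact contDiffAt_const
  · simp only [Matrix.updateRow_ne hk]
    exact hM k l

lemma contDiffAt_matrix_inv {M : E → Matrix ι ι ℝ} {q : E}
    (hM : ∀ a b, ContDiffAt ℝ (⊤:ℕ∞) (fun p => M p a b) q)
    (hdet : (M q).det ≠ 0) (a b : ι) :
    ContDiffAt ℝ (⊤:ℕ∞) (fun p => (M p)⁻¹ a b) q := by
  have : (fun p => (M p)⁻¹ a b) = fun p => ((M p).det)⁻¹ * (M p).adjugate a b := by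
    funext p
    rw [Matrix.inv_def, Matrix.smul_apply, Ring.inverse_eq_inv', smul_eq_mul]
  rw [this]
  exact ((contDiffAt_matrix_det hM).inv hdet).mul (contDiffAt_matrix_adjugate hM a b)

end MatrixSmooth

section FinslerBasics

open Function Filter

variable {ι : Type*} [Fintype ι] [DecidableEq ι]
variable {U : Set (ι → ℝ)} {F : (ι → ℝ) → (ι → ℝ) → ℝ}

/-- Joint smoothness of `G = F²` at good points. -/
lemma IsFinslerMetric.contDiffAt (hF : IsFinslerMetric U F) {x y : ι → ℝ}
    (hx : x ∈ U) (hy : y ≠ 0) :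
    ContDiffAt ℝ (⊤:ℕ∞) (fun p : (ι → ℝ) × (ι → ℝ) => (F p.1 p.2) ^ 2) (x, y) := by
  apply hF.smooth.contDiffAt
  exact (hF.isOpen.prod (isOpen_ne : IsOpen {y : ι → ℝ | y ≠ 0})).mem_nhds ⟨hx, hy⟩

lemma IsFinslerMetric.diffY (hF : IsFinslerMetric U F) {x y : ι → ℝ}
    (hx : x ∈ U) (hy : y ≠ 0) : DifferentiableAt ℝ (fun y' => (F x y') ^ 2) y :=
  ContDiffAt.diffY (g := fun x' y' => (F x' y') ^ 2) (hF.contDiffAt hx hy)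

/-- 2-homogeneity of `G = F²` in `y`. -/
lemma IsFinslerMetric.sq_homog (hF : IsFinslerMetric U F) {x : ι → ℝ} (hx : x ∈ U)
    (y : ι → ℝ) (c : ℝ) : (F x (c • y)) ^ 2 = c ^ 2 * (F x y) ^ 2 := by
  rw [hF.homog x hx y c, mul_pow, sq_abs]

/-- Euler identity E1: `∑ y^b G_b = 2 G`. -/
lemma IsFinslerMetric.euler1 (hF : IsFinslerMetric U F) {x y : ι → ℝ}
    (hx : x ∈ U) (hy : y ≠ 0) :
    ∑ b, y b * pdy (fun x' y' => (F x' y') ^ 2) b x y = 2 * (F x y) ^ 2 := by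
  have hdiff : DifferentiableAt ℝ (fun y' => (F x y') ^ 2) y := hF.diffY hx hy
  have heuler := euler_identity (d := 2) hdiff
    (Filter.Eventually.of_forall fun c => hF.sq_homog hx y c)
  rw [fderiv_apply_eq_sum hdiff] at heuler
  simpa [pdy] using heuler

/-- 1-homogeneity of `G_b` in `y` (for positive scaling). -/
lemma IsFinslerMetric.pdy_homog (hF : IsFinslerMetric U F) {x y : ι → ℝ} {c : ℝ}
    (hx : x ∈ U) (hy : y ≠ 0) (hc : 0 < c) (b : ι) :
    pdy (fun x' y' => (F x' y') ^ 2) b x (c • y) =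
      c * pdy (fun x' y' => (F x' y') ^ 2) b x y := by
  have hcy : c • y ≠ 0 := smul_ne_zero hc.ne' hy
  have hdiff : DifferentiableAt ℝ (fun y' => (F x y') ^ 2) (c • y) := hF.diffY hx hcy
  have hdiff0 : DifferentiableAt ℝ (fun y' => (F x y') ^ 2) y := hF.diffY hx hy
  have hfun : (fun y' => (F x (c • y')) ^ 2) = fun y' => c ^ 2 * (F x y') ^ 2 := by
    funext y'; exact hF.sq_homog hx y' c
  have hsm : HasFDerivAt (fun y' : ι → ℝ => c • y') (c • ContinuousLinearMap.id ℝ (ι → ℝ)) y :=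
    (c • ContinuousLinearMap.id ℝ (ι → ℝ)).hasFDerivAt
  have h1 : HasFDerivAt (fun y' => (F x (c • y')) ^ 2)
      ((fderiv ℝ (fun y' => (F x y') ^ 2) (c • y)).comp (c • ContinuousLinearMap.id ℝ (ι → ℝ)))
      y := hdiff.hasFDerivAt.comp y hsm
  have h2 : HasFDerivAt (fun y' => c ^ 2 * (F x y') ^ 2)
      ((c ^ 2) • fderiv ℝ (fun y' => (F x y') ^ 2) y) y := hdiff0.hasFDerivAt.const_mul _
  rw [hfun] at h1
  have huniq := h1.unique h2
  have := congrArg (fun (L : (ι → ℝ) →L[ℝ] ℝ) => L (Pi.single b 1)) huniq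
  simp only [ContinuousLinearMap.comp_apply, ContinuousLinearMap.smul_apply,
    ContinuousLinearMap.coe_smul', Pi.smul_apply, ContinuousLinearMap.coe_id', id_eq] at this
  -- this : fderiv (c•y) (c • e_b) = c^2 • fderiv y e_b
  have hmap : fderiv ℝ (fun y' => (F x y') ^ 2) (c • y) (c • (Pi.single b 1 : ι → ℝ)) =
      c * fderiv ℝ (fun y' => (F x y') ^ 2) (c • y) (Pi.single b 1) := by
    rw [(fderiv ℝ (fun y' => (F x y') ^ 2) (c • y)).map_smul]; rfl
  rw [hmap] at this
  have hc' : (c : ℝ) ≠ 0 := hc.ne'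
  unfold pdy
  field_simp at this ⊢
  rw [smul_eq_mul] at this; nlinarith [this]

lemma IsFinslerMetric.diffX (hF : IsFinslerMetric U F) {x y : ι → ℝ}
    (hx : x ∈ U) (hy : y ≠ 0) : DifferentiableAt ℝ (fun x' => (F x' y) ^ 2) x :=
  ContDiffAt.diffX (g := fun x' y' => (F x' y') ^ 2) (hF.contDiffAt hx hy)

lemma IsFinslerMetric.pdy_diffY (hF : IsFinslerMetric U F) {x y : ι → ℝ}
    (hx : x ∈ U) (hy : y ≠ 0) (c : ι) :
    DifferentiableAt ℝ (pdy (fun x' y' => (F x' y') ^ 2) c x) y :=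
  ContDiffAt.diffY (g := pdy (fun x' y' => (F x' y') ^ 2) c)
    (contDiffAt_pdy (g := fun x' y' => (F x' y') ^ 2) (hF.contDiffAt hx hy) c)

lemma IsFinslerMetric.pdy_diffX (hF : IsFinslerMetric U F) {x y : ι → ℝ}
    (hx : x ∈ U) (hy : y ≠ 0) (c : ι) :
    DifferentiableAt ℝ (fun x' => pdy (fun x'' y' => (F x'' y') ^ 2) c x' y) x :=
  ContDiffAt.diffX (g := pdy (fun x' y' => (F x' y') ^ 2) c)
    (contDiffAt_pdy (g := fun x' y' => (F x' y') ^ 2) (hF.contDiffAt hx hy) c)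

end FinslerBasics
section FinslerEuler

open Function Filter

variable {ι : Type*} [Fintype ι] [DecidableEq ι]
variable {U : Set (ι → ℝ)} {F : (ι → ℝ) → (ι → ℝ) → ℝ}

/-- The numerator vector of the spray. -/
noncomputable def sprayNum (F : (ι → ℝ) → (ι → ℝ) → ℝ) (b : ι) (x y : ι → ℝ) : ℝ :=
  (∑ γ, pdx (pdy (fun x' y' => (F x' y') ^ 2) b) γ x y * y γ) -
    pdx (fun x' y' => (F x' y') ^ 2) b x y

lemma IsFinslerMetric.euler2 (hF : IsFinslerMetric U F) {x y : ι → ℝ}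
    (hx : x ∈ U) (hy : y ≠ 0) (c : ι) :
    ∑ b, y b * pdy (pdy (fun x' y' => (F x' y') ^ 2) c) b x y =
      pdy (fun x' y' => (F x' y') ^ 2) c x y := by
  have hjoint := contDiffAt_pdy (g := fun x' y' => (F x' y') ^ 2) (hF.contDiffAt hx hy) c
  have hu : DifferentiableAt ℝ (pdy (fun x' y' => (F x' y') ^ 2) c x) y :=
    ContDiffAt.diffY (g := pdy (fun x' y' => (F x' y') ^ 2) c) hjoint
  have hhom : ∀ᶠ c' in nhds (1:ℝ),
      pdy (fun x' y' => (F x' y') ^ 2) c x (c' • y) =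
        c' ^ 1 * pdy (fun x' y' => (F x' y') ^ 2) c x y := by
    filter_upwards [eventually_gt_nhds zero_lt_one] with c' hc'
    rw [pow_one]
    exact hF.pdy_homog hx hy hc' c
  have heuler := euler_identity (d := 1) hu hhom
  rw [fderiv_apply_eq_sum hu] at heuler
  simpa [pdy] using heuler

lemma IsFinslerMetric.euler3 (hF : IsFinslerMetric U F) {x y : ι → ℝ}
    (hx : x ∈ U) (hy : y ≠ 0) (c : ι) :
    ∑ b, y b * pdx (pdy (fun x' y' => (F x' y') ^ 2) b) c x y =
      2 * pdx (fun x' y' => (F x' y') ^ 2) c x y := by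
  set K := fun x' y' => (F x' y') ^ 2 with hK
  have hdiffb : ∀ b : ι, DifferentiableAt ℝ (fun x' => pdy K b x' y) x := fun b =>
    ContDiffAt.diffX (g := pdy K b) (contDiffAt_pdy (g := K) (hF.contDiffAt hx hy) b)
  have hdiffK : DifferentiableAt ℝ (fun x' => K x' y) x :=
    ContDiffAt.diffX (g := K) (hF.contDiffAt hx hy)
  have hL : HasFDerivAt (fun x' => ∑ b, y b * pdy K b x' y)
      (∑ b, y b • fderiv ℝ (fun x' => pdy K b x' y) x) x := by
    apply HasFDerivAt.fun_sum
    intro b _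
    exact (hdiffb b).hasFDerivAt.const_mul (y b)
  have hR : HasFDerivAt (fun x' => 2 * K x' y) ((2:ℝ) • fderiv ℝ (fun x' => K x' y) x) x :=
    hdiffK.hasFDerivAt.const_mul 2
  have heq : (fun x' => ∑ b, y b * pdy K b x' y) =ᶠ[nhds x] fun x' => 2 * K x' y := by
    filter_upwards [hF.isOpen.mem_nhds hx] with x' hx'
    exact hF.euler1 hx' hy
  have h1 : fderiv ℝ (fun x' => ∑ b, y b * pdy K b x' y) x =
      ∑ b, y b • fderiv ℝ (fun x' => pdy K b x' y) x := hL.fderiv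
  have h2 : fderiv ℝ (fun x' => 2 * K x' y) x = (2:ℝ) • fderiv ℝ (fun x' => K x' y) x :=
    hR.fderiv
  have h3 := heq.fderiv_eq (𝕜 := ℝ)
  rw [h1, h2] at h3
  have := congrArg (fun (L : (ι → ℝ) →L[ℝ] ℝ) => L (Pi.single c 1)) h3
  simpa [pdx, ContinuousLinearMap.sum_apply, smul_eq_mul] using this

lemma IsFinslerMetric.isUnit_det (hF : IsFinslerMetric U F) {x y : ι → ℝ}
    (hx : x ∈ U) (hy : y ≠ 0) : IsUnit (fundTensor F x y).det :=
  isUnit_iff_ne_zero.mpr (hF.posDef x hx y hy).det_pos.ne'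

/-- I1 : the defining linear system of the spray. -/
lemma IsFinslerMetric.fundTensor_spray (hF : IsFinslerMetric U F) {x y : ι → ℝ}
    (hx : x ∈ U) (hy : y ≠ 0) (b : ι) :
    ∑ c, fundTensor F x y b c * (2 * spray F c x y) = sprayNum F b x y := by
  classical
  set A := fundTensor F x y with hA
  have h2 : ∀ c, 2 * spray F c x y = (A⁻¹ *ᵥ (fun d => sprayNum F d x y)) c := by
    intro c
    show 2 * ((1 / 2) * ∑ β, A⁻¹ c β * sprayNum F β x y) = _
    simp only [Matrix.mulVec, dotProduct]
    ring
  calc ∑ c, A b c * (2 * spray F c x y)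
      = (A *ᵥ (A⁻¹ *ᵥ (fun d => sprayNum F d x y))) b := by
        simp only [Matrix.mulVec, dotProduct]
        refine Finset.sum_congr rfl fun c _ => ?_
        rw [h2 c]
        simp [Matrix.mulVec, dotProduct]
    _ = sprayNum F b x y := by
        rw [Matrix.mulVec_mulVec, Matrix.mul_nonsing_inv _ (hF.isUnit_det hx hy),
          Matrix.one_mulVec]

/-- I2 : contraction of the spray with `G_c`. -/
lemma IsFinslerMetric.pdy_spray (hF : IsFinslerMetric U F) {x y : ι → ℝ}
    (hx : x ∈ U) (hy : y ≠ 0) :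
    ∑ c, pdy (fun x' y' => (F x' y') ^ 2) c x y * (2 * spray F c x y) =
      ∑ c, pdx (fun x' y' => (F x' y') ^ 2) c x y * y c := by
  classical
  set K := fun x' y' => (F x' y') ^ 2 with hK
  have step1 : ∑ c, pdy K c x y * (2 * spray F c x y) =
      ∑ b, y b * sprayNum F b x y := by
    calc ∑ c, pdy K c x y * (2 * spray F c x y)
        = ∑ c, (∑ b, y b * pdy (pdy K c) b x y) * (2 * spray F c x y) := by
          exact Finset.sum_congr rfl fun c _ => by rw [hF.euler2 hx hy c]
      _ = ∑ c, ∑ b, (y b * pdy (pdy K c) b x y) * (2 * spray F c x y) := by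
          simp only [Finset.sum_mul]
      _ = ∑ b, ∑ c, (y b * pdy (pdy K c) b x y) * (2 * spray F c x y) := Finset.sum_comm
      _ = ∑ b, y b * (∑ c, fundTensor F x y b c * (2 * spray F c x y)) := by
          simp only [Finset.mul_sum]
          refine Finset.sum_congr rfl fun b _ => Finset.sum_congr rfl fun c _ => by
            rw [show fundTensor F x y b c = pdy (pdy K c) b x y from rfl]; ring
      _ = ∑ b, y b * sprayNum F b x y := by
          exact Finset.sum_congr rfl fun b _ => by rw [hF.fundTensor_spray hx hy b]
  rw [step1]
  have step2 : ∑ b, y b * sprayNum F b x y =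
      (∑ b, y b * ∑ γ, pdx (pdy K b) γ x y * y γ) - ∑ b, y b * pdx K b x y := by
    unfold sprayNum
    rw [← Finset.sum_sub_distrib]
    exact Finset.sum_congr rfl fun b _ => by ring
  rw [step2]
  have step3 : (∑ b, y b * ∑ γ, pdx (pdy K b) γ x y * y γ) =
      ∑ γ, (∑ b, y b * pdx (pdy K b) γ x y) * y γ := by
    simp only [Finset.mul_sum, Finset.sum_mul]
    rw [Finset.sum_comm]
    exact Finset.sum_congr rfl fun γ _ => Finset.sum_congr rfl fun b _ => by ring
  rw [step3]
  have step4 : ∀ γ, (∑ b, y b * pdx (pdy K b) γ x y) = 2 * pdx K γ x y := fun γ =>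
    hF.euler3 hx hy γ
  calc (∑ γ, (∑ b, y b * pdx (pdy K b) γ x y) * y γ) - ∑ b, y b * pdx K b x y
      = (∑ γ, 2 * pdx K γ x y * y γ) - ∑ b, y b * pdx K b x y := by
        apply congrArg (· - _)
        exact Finset.sum_congr rfl fun γ _ => by rw [step4 γ]
    _ = ∑ c, pdx K c x y * y c := by
        rw [← Finset.sum_sub_distrib]
        exact Finset.sum_congr rfl fun c _ => by ring

end FinslerEuler
section SpraySmooth

open Function Filter

variable {ι : Type*} [Fintype ι] [DecidableEq ι]
variable {U : Set (ι → ℝ)} {F : (ι → ℝ) → (ι → ℝ) → ℝ}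

lemma IsFinslerMetric.fundTensor_contDiffAt (hF : IsFinslerMetric U F) {x y : ι → ℝ}
    (hx : x ∈ U) (hy : y ≠ 0) (b c : ι) :
    ContDiffAt ℝ (⊤:ℕ∞) (fun p : (ι → ℝ) × (ι → ℝ) => fundTensor F p.1 p.2 b c) (x, y) := by
  have h := contDiffAt_pdy (g := pdy (fun x' y' => (F x' y') ^ 2) c)
    (contDiffAt_pdy (g := fun x' y' => (F x' y') ^ 2) (hF.contDiffAt hx hy) c) b
  exact h

lemma IsFinslerMetric.sprayNum_contDiffAt (hF : IsFinslerMetric U F) {x y : ι → ℝ}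
    (hx : x ∈ U) (hy : y ≠ 0) (b : ι) :
    ContDiffAt ℝ (⊤:ℕ∞) (fun p : (ι → ℝ) × (ι → ℝ) => sprayNum F b p.1 p.2) (x, y) := by
  have hG := hF.contDiffAt hx hy
  have hcoord : ∀ γ : ι, ContDiffAt ℝ (⊤:ℕ∞)
      (fun p : (ι → ℝ) × (ι → ℝ) => p.2 γ) (x, y) := fun γ =>
    (contDiffAt_pi.mp contDiffAt_snd) γ
  exact (ContDiffAt.sum fun γ _ =>
    (contDiffAt_pdx (g := pdy (fun x' y' => (F x' y') ^ 2) b)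
      (contDiffAt_pdy (g := fun x' y' => (F x' y') ^ 2) hG b) γ).mul (hcoord γ)).sub
    (contDiffAt_pdx (g := fun x' y' => (F x' y') ^ 2) hG b)

lemma IsFinslerMetric.spray_contDiffAt (hF : IsFinslerMetric U F) {x y : ι → ℝ}
    (hx : x ∈ U) (hy : y ≠ 0) (a : ι) :
    ContDiffAt ℝ (⊤:ℕ∞) (fun p : (ι → ℝ) × (ι → ℝ) => spray F a p.1 p.2) (x, y) := by
  have hdet : ((fun p : (ι → ℝ) × (ι → ℝ) => fundTensor F p.1 p.2) (x, y)).det ≠ 0 :=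
    (hF.posDef x hx y hy).det_pos.ne'
  have hinv : ∀ b c, ContDiffAt ℝ (⊤:ℕ∞)
      (fun p : (ι → ℝ) × (ι → ℝ) => (fundTensor F p.1 p.2)⁻¹ b c) (x, y) := fun b c =>
    contDiffAt_matrix_inv (M := fun p : (ι → ℝ) × (ι → ℝ) => fundTensor F p.1 p.2)
      (fun a b => hF.fundTensor_contDiffAt hx hy a b) hdet b c
  show ContDiffAt ℝ (⊤:ℕ∞) (fun p : (ι → ℝ) × (ι → ℝ) =>
    (1 / 2 : ℝ) * ∑ β, (fundTensor F p.1 p.2)⁻¹ a β * sprayNum F β p.1 p.2) (x, y)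
  exact contDiffAt_const.mul (ContDiffAt.sum fun β _ =>
    (hinv a β).mul (hF.sprayNum_contDiffAt hx hy β))

end SpraySmooth
section ProductSetup

open Function Filter

variable {m n : ℕ}

/-- Restriction to the first block, as a continuous linear map. -/
noncomputable def resL (m n : ℕ) : ((Fin m ⊕ Fin n) → ℝ) →L[ℝ] (Fin m → ℝ) :=
  LinearMap.toContinuousLinearMap (LinearMap.funLeft ℝ ℝ Sum.inl)

/-- Restriction to the second block, as a continuous linear map. -/
noncomputable def resR (m n : ℕ) : ((Fin m ⊕ Fin n) → ℝ) →L[ℝ] (Fin n → ℝ) :=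
  LinearMap.toContinuousLinearMap (LinearMap.funLeft ℝ ℝ Sum.inr)

@[simp] lemma resL_apply (v : (Fin m ⊕ Fin n) → ℝ) : resL m n v = v ∘ Sum.inl := rfl
@[simp] lemma resR_apply (v : (Fin m ⊕ Fin n) → ℝ) : resR m n v = v ∘ Sum.inr := rfl

lemma resL_single_inl (b : Fin m) :
    resL m n (Pi.single (Sum.inl b) 1) = Pi.single b 1 := by
  funext i
  simp [resL, LinearMap.funLeft, Pi.single_apply, Sum.inl.injEq]

lemma resL_single_inr (b : Fin n) :
    resL m n (Pi.single (Sum.inr b) 1) = 0 := by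
  funext i
  simp [resL, LinearMap.funLeft, Pi.single_apply]

lemma resR_single_inr (b : Fin n) :
    resR m n (Pi.single (Sum.inr b) 1) = Pi.single b 1 := by
  funext i
  simp [resR, LinearMap.funLeft, Pi.single_apply, Sum.inr.injEq]

lemma resR_single_inl (b : Fin m) :
    resR m n (Pi.single (Sum.inl b) 1) = 0 := by
  funext i
  simp [resR, LinearMap.funLeft, Pi.single_apply]

end ProductSetup
section Masters

open Function Filter

variable {m n : ℕ}
variable {F₁ : (Fin m → ℝ) → (Fin m → ℝ) → ℝ} {F₂ : (Fin n → ℝ) → (Fin n → ℝ) → ℝ}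

/-- Master `y`-derivative, `inl` direction. -/
lemma master_pdy_inl (φ : ℝ → ℝ → ℝ)
    (A : (Fin m → ℝ) → (Fin m → ℝ) → ℝ) (B : (Fin n → ℝ) → (Fin n → ℝ) → ℝ)
    {x y : (Fin m ⊕ Fin n) → ℝ}
    (hφ : DifferentiableAt ℝ (fun p : ℝ × ℝ => φ p.1 p.2)
      ((F₁ (x ∘ Sum.inl) (y ∘ Sum.inl)) ^ 2, (F₂ (x ∘ Sum.inr) (y ∘ Sum.inr)) ^ 2))
    (hK : DifferentiableAt ℝ (fun y' => (F₁ (x ∘ Sum.inl) y') ^ 2) (y ∘ Sum.inl))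
    (hH : DifferentiableAt ℝ (fun y' => (F₂ (x ∘ Sum.inr) y') ^ 2) (y ∘ Sum.inr))
    (hA : DifferentiableAt ℝ (A (x ∘ Sum.inl)) (y ∘ Sum.inl))
    (hB : DifferentiableAt ℝ (B (x ∘ Sum.inr)) (y ∘ Sum.inr))
    (b : Fin m) :
    pdy (fun x' y' => φ ((F₁ (x' ∘ Sum.inl) (y' ∘ Sum.inl)) ^ 2)
        ((F₂ (x' ∘ Sum.inr) (y' ∘ Sum.inr)) ^ 2) *
        A (x' ∘ Sum.inl) (y' ∘ Sum.inl) * B (x' ∘ Sum.inr) (y' ∘ Sum.inr))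
      (Sum.inl b) x y =
    pderivS φ ((F₁ (x ∘ Sum.inl) (y ∘ Sum.inl)) ^ 2) ((F₂ (x ∘ Sum.inr) (y ∘ Sum.inr)) ^ 2) *
        pdy (fun a c => (F₁ a c) ^ 2) b (x ∘ Sum.inl) (y ∘ Sum.inl) *
        A (x ∘ Sum.inl) (y ∘ Sum.inl) * B (x ∘ Sum.inr) (y ∘ Sum.inr) +
      φ ((F₁ (x ∘ Sum.inl) (y ∘ Sum.inl)) ^ 2) ((F₂ (x ∘ Sum.inr) (y ∘ Sum.inr)) ^ 2) *
        pdy A b (x ∘ Sum.inl) (y ∘ Sum.inl) * B (x ∘ Sum.inr) (y ∘ Sum.inr) := by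
  set x₁ := x ∘ Sum.inl
  set x₂ := x ∘ Sum.inr
  set y₁ := y ∘ Sum.inl
  set y₂ := y ∘ Sum.inr
  set s := (F₁ x₁ y₁) ^ 2
  set t := (F₂ x₂ y₂) ^ 2
  set DK := fderiv ℝ (fun y' => (F₁ x₁ y') ^ 2) y₁
  set DH := fderiv ℝ (fun y' => (F₂ x₂ y') ^ 2) y₂
  set DA := fderiv ℝ (A x₁) y₁
  set DB := fderiv ℝ (B x₂) y₂
  set Dφ := fderiv ℝ (fun p : ℝ × ℝ => φ p.1 p.2) (s, t)
  have u1 : HasFDerivAt (fun y' : (Fin m ⊕ Fin n) → ℝ => (F₁ x₁ (y' ∘ Sum.inl)) ^ 2)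
      (DK.comp (resL m n)) y := by have := hK.hasFDerivAt.comp y (resL m n).hasFDerivAt; exact this
  have u2 : HasFDerivAt (fun y' : (Fin m ⊕ Fin n) → ℝ => (F₂ x₂ (y' ∘ Sum.inr)) ^ 2)
      (DH.comp (resR m n)) y := by have := hH.hasFDerivAt.comp y (resR m n).hasFDerivAt; exact this
  have uφ : HasFDerivAt (fun y' : (Fin m ⊕ Fin n) → ℝ =>
      φ ((F₁ x₁ (y' ∘ Sum.inl)) ^ 2) ((F₂ x₂ (y' ∘ Sum.inr)) ^ 2))
      (Dφ.comp ((DK.comp (resL m n)).prod (DH.comp (resR m n)))) y :=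
    by have := hφ.hasFDerivAt.comp y (u1.prodMk u2); exact this
  have uA : HasFDerivAt (fun y' : (Fin m ⊕ Fin n) → ℝ => A x₁ (y' ∘ Sum.inl))
      (DA.comp (resL m n)) y := hA.hasFDerivAt.comp y (resL m n).hasFDerivAt
  have uB : HasFDerivAt (fun y' : (Fin m ⊕ Fin n) → ℝ => B x₂ (y' ∘ Sum.inr))
      (DB.comp (resR m n)) y := hB.hasFDerivAt.comp y (resR m n).hasFDerivAt
  have hprod := (uφ.mul uA).mul uB
  have hval := hprod.fderiv
  show fderiv ℝ _ y (Pi.single (Sum.inl b) 1) = _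
  erw [hval]
  have e1 : (DK.comp (resL m n)) (Pi.single (Sum.inl b) 1) =
      pdy (fun a c => (F₁ a c) ^ 2) b x₁ y₁ := by
    simp only [ContinuousLinearMap.comp_apply, resL_single_inl]; rfl
  have e2 : (DH.comp (resR m n)) (Pi.single (Sum.inl b) 1) = 0 := by
    simp only [ContinuousLinearMap.comp_apply, resR_single_inl, map_zero]
  have e3 : (DA.comp (resL m n)) (Pi.single (Sum.inl b) 1) = pdy A b x₁ y₁ := by
    simp only [ContinuousLinearMap.comp_apply, resL_single_inl]; rfl
  have e4 : (DB.comp (resR m n)) (Pi.single (Sum.inl b) 1) = 0 := by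
    simp only [ContinuousLinearMap.comp_apply, resR_single_inl, map_zero]
  have eφ : (Dφ.comp ((DK.comp (resL m n)).prod (DH.comp (resR m n))))
      (Pi.single (Sum.inl b) 1) =
      pdy (fun a c => (F₁ a c) ^ 2) b x₁ y₁ * pderivS φ s t := by
    rw [ContinuousLinearMap.comp_apply, ContinuousLinearMap.prod_apply, e1, e2]
    rw [show Dφ = fderiv ℝ (fun p : ℝ × ℝ => φ p.1 p.2) (s, t) from rfl]
    rw [fderiv_two_apply hφ]
    simp
  simp only [ContinuousLinearMap.add_apply, ContinuousLinearMap.smul_apply,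
    ContinuousLinearMap.coe_smul', Pi.smul_apply, eφ, e3, e4, smul_eq_mul]
  ring

/-- Master `y`-derivative, `inr` direction. -/
lemma master_pdy_inr (φ : ℝ → ℝ → ℝ)
    (A : (Fin m → ℝ) → (Fin m → ℝ) → ℝ) (B : (Fin n → ℝ) → (Fin n → ℝ) → ℝ)
    {x y : (Fin m ⊕ Fin n) → ℝ}
    (hφ : DifferentiableAt ℝ (fun p : ℝ × ℝ => φ p.1 p.2)
      ((F₁ (x ∘ Sum.inl) (y ∘ Sum.inl)) ^ 2, (F₂ (x ∘ Sum.inr) (y ∘ Sum.inr)) ^ 2))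
    (hK : DifferentiableAt ℝ (fun y' => (F₁ (x ∘ Sum.inl) y') ^ 2) (y ∘ Sum.inl))
    (hH : DifferentiableAt ℝ (fun y' => (F₂ (x ∘ Sum.inr) y') ^ 2) (y ∘ Sum.inr))
    (hA : DifferentiableAt ℝ (A (x ∘ Sum.inl)) (y ∘ Sum.inl))
    (hB : DifferentiableAt ℝ (B (x ∘ Sum.inr)) (y ∘ Sum.inr))
    (b : Fin n) :
    pdy (fun x' y' => φ ((F₁ (x' ∘ Sum.inl) (y' ∘ Sum.inl)) ^ 2)
        ((F₂ (x' ∘ Sum.inr) (y' ∘ Sum.inr)) ^ 2) *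
        A (x' ∘ Sum.inl) (y' ∘ Sum.inl) * B (x' ∘ Sum.inr) (y' ∘ Sum.inr))
      (Sum.inr b) x y =
    pderivT φ ((F₁ (x ∘ Sum.inl) (y ∘ Sum.inl)) ^ 2) ((F₂ (x ∘ Sum.inr) (y ∘ Sum.inr)) ^ 2) *
        pdy (fun a c => (F₂ a c) ^ 2) b (x ∘ Sum.inr) (y ∘ Sum.inr) *
        A (x ∘ Sum.inl) (y ∘ Sum.inl) * B (x ∘ Sum.inr) (y ∘ Sum.inr) +
      φ ((F₁ (x ∘ Sum.inl) (y ∘ Sum.inl)) ^ 2) ((F₂ (x ∘ Sum.inr) (y ∘ Sum.inr)) ^ 2) *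
        A (x ∘ Sum.inl) (y ∘ Sum.inl) * pdy B b (x ∘ Sum.inr) (y ∘ Sum.inr) := by
  set x₁ := x ∘ Sum.inl
  set x₂ := x ∘ Sum.inr
  set y₁ := y ∘ Sum.inl
  set y₂ := y ∘ Sum.inr
  set s := (F₁ x₁ y₁) ^ 2
  set t := (F₂ x₂ y₂) ^ 2
  set DK := fderiv ℝ (fun y' => (F₁ x₁ y') ^ 2) y₁
  set DH := fderiv ℝ (fun y' => (F₂ x₂ y') ^ 2) y₂
  set DA := fderiv ℝ (A x₁) y₁
  set DB := fderiv ℝ (B x₂) y₂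
  set Dφ := fderiv ℝ (fun p : ℝ × ℝ => φ p.1 p.2) (s, t)
  have u1 : HasFDerivAt (fun y' : (Fin m ⊕ Fin n) → ℝ => (F₁ x₁ (y' ∘ Sum.inl)) ^ 2)
      (DK.comp (resL m n)) y := by have := hK.hasFDerivAt.comp y (resL m n).hasFDerivAt; exact this
  have u2 : HasFDerivAt (fun y' : (Fin m ⊕ Fin n) → ℝ => (F₂ x₂ (y' ∘ Sum.inr)) ^ 2)
      (DH.comp (resR m n)) y := by have := hH.hasFDerivAt.comp y (resR m n).hasFDerivAt; exact this
  have uφ : HasFDerivAt (fun y' : (Fin m ⊕ Fin n) → ℝ =>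
      φ ((F₁ x₁ (y' ∘ Sum.inl)) ^ 2) ((F₂ x₂ (y' ∘ Sum.inr)) ^ 2))
      (Dφ.comp ((DK.comp (resL m n)).prod (DH.comp (resR m n)))) y :=
    by have := hφ.hasFDerivAt.comp y (u1.prodMk u2); exact this
  have uA : HasFDerivAt (fun y' : (Fin m ⊕ Fin n) → ℝ => A x₁ (y' ∘ Sum.inl))
      (DA.comp (resL m n)) y := hA.hasFDerivAt.comp y (resL m n).hasFDerivAt
  have uB : HasFDerivAt (fun y' : (Fin m ⊕ Fin n) → ℝ => B x₂ (y' ∘ Sum.inr))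
      (DB.comp (resR m n)) y := hB.hasFDerivAt.comp y (resR m n).hasFDerivAt
  have hprod := (uφ.mul uA).mul uB
  have hval := hprod.fderiv
  show fderiv ℝ _ y (Pi.single (Sum.inr b) 1) = _
  erw [hval]
  have e1 : (DK.comp (resL m n)) (Pi.single (Sum.inr b) 1) = 0 := by
    simp only [ContinuousLinearMap.comp_apply, resL_single_inr, map_zero]
  have e2 : (DH.comp (resR m n)) (Pi.single (Sum.inr b) 1) =
      pdy (fun a c => (F₂ a c) ^ 2) b x₂ y₂ := by
    simp only [ContinuousLinearMap.comp_apply, resR_single_inr]; rfl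
  have e3 : (DA.comp (resL m n)) (Pi.single (Sum.inr b) 1) = 0 := by
    simp only [ContinuousLinearMap.comp_apply, resL_single_inr, map_zero]
  have e4 : (DB.comp (resR m n)) (Pi.single (Sum.inr b) 1) = pdy B b x₂ y₂ := by
    simp only [ContinuousLinearMap.comp_apply, resR_single_inr]; rfl
  have eφ : (Dφ.comp ((DK.comp (resL m n)).prod (DH.comp (resR m n))))
      (Pi.single (Sum.inr b) 1) =
      pdy (fun a c => (F₂ a c) ^ 2) b x₂ y₂ * pderivT φ s t := by
    rw [ContinuousLinearMap.comp_apply, ContinuousLinearMap.prod_apply, e1, e2]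
    rw [show Dφ = fderiv ℝ (fun p : ℝ × ℝ => φ p.1 p.2) (s, t) from rfl]
    rw [fderiv_two_apply hφ]
    simp
  simp only [ContinuousLinearMap.add_apply, ContinuousLinearMap.smul_apply,
    ContinuousLinearMap.coe_smul', Pi.smul_apply, eφ, e3, e4, smul_eq_mul, Pi.mul_apply]
  ring

/-- Master `x`-derivative, `inl` direction. -/
lemma master_pdx_inl (φ : ℝ → ℝ → ℝ)
    (A : (Fin m → ℝ) → (Fin m → ℝ) → ℝ) (B : (Fin n → ℝ) → (Fin n → ℝ) → ℝ)
    {x y : (Fin m ⊕ Fin n) → ℝ}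
    (hφ : DifferentiableAt ℝ (fun p : ℝ × ℝ => φ p.1 p.2)
      ((F₁ (x ∘ Sum.inl) (y ∘ Sum.inl)) ^ 2, (F₂ (x ∘ Sum.inr) (y ∘ Sum.inr)) ^ 2))
    (hK : DifferentiableAt ℝ (fun a => (F₁ a (y ∘ Sum.inl)) ^ 2) (x ∘ Sum.inl))
    (hH : DifferentiableAt ℝ (fun a => (F₂ a (y ∘ Sum.inr)) ^ 2) (x ∘ Sum.inr))
    (hA : DifferentiableAt ℝ (fun a => A a (y ∘ Sum.inl)) (x ∘ Sum.inl))
    (hB : DifferentiableAt ℝ (fun a => B a (y ∘ Sum.inr)) (x ∘ Sum.inr))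
    (b : Fin m) :
    pdx (fun x' y' => φ ((F₁ (x' ∘ Sum.inl) (y' ∘ Sum.inl)) ^ 2)
        ((F₂ (x' ∘ Sum.inr) (y' ∘ Sum.inr)) ^ 2) *
        A (x' ∘ Sum.inl) (y' ∘ Sum.inl) * B (x' ∘ Sum.inr) (y' ∘ Sum.inr))
      (Sum.inl b) x y =
    pderivS φ ((F₁ (x ∘ Sum.inl) (y ∘ Sum.inl)) ^ 2) ((F₂ (x ∘ Sum.inr) (y ∘ Sum.inr)) ^ 2) *
        pdx (fun a c => (F₁ a c) ^ 2) b (x ∘ Sum.inl) (y ∘ Sum.inl) *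
        A (x ∘ Sum.inl) (y ∘ Sum.inl) * B (x ∘ Sum.inr) (y ∘ Sum.inr) +
      φ ((F₁ (x ∘ Sum.inl) (y ∘ Sum.inl)) ^ 2) ((F₂ (x ∘ Sum.inr) (y ∘ Sum.inr)) ^ 2) *
        pdx A b (x ∘ Sum.inl) (y ∘ Sum.inl) * B (x ∘ Sum.inr) (y ∘ Sum.inr) := by
  set x₁ := x ∘ Sum.inl
  set x₂ := x ∘ Sum.inr
  set y₁ := y ∘ Sum.inl
  set y₂ := y ∘ Sum.inr
  set s := (F₁ x₁ y₁) ^ 2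
  set t := (F₂ x₂ y₂) ^ 2
  set DK := fderiv ℝ (fun a => (F₁ a y₁) ^ 2) x₁
  set DH := fderiv ℝ (fun a => (F₂ a y₂) ^ 2) x₂
  set DA := fderiv ℝ (fun a => A a y₁) x₁
  set DB := fderiv ℝ (fun a => B a y₂) x₂
  set Dφ := fderiv ℝ (fun p : ℝ × ℝ => φ p.1 p.2) (s, t)
  have u1 : HasFDerivAt (fun a : (Fin m ⊕ Fin n) → ℝ => (F₁ (a ∘ Sum.inl) y₁) ^ 2)
      (DK.comp (resL m n)) x := by have := hK.hasFDerivAt.comp x (resL m n).hasFDerivAt; exact this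
  have u2 : HasFDerivAt (fun a : (Fin m ⊕ Fin n) → ℝ => (F₂ (a ∘ Sum.inr) y₂) ^ 2)
      (DH.comp (resR m n)) x := by have := hH.hasFDerivAt.comp x (resR m n).hasFDerivAt; exact this
  have uφ : HasFDerivAt (fun a : (Fin m ⊕ Fin n) → ℝ =>
      φ ((F₁ (a ∘ Sum.inl) y₁) ^ 2) ((F₂ (a ∘ Sum.inr) y₂) ^ 2))
      (Dφ.comp ((DK.comp (resL m n)).prod (DH.comp (resR m n)))) x :=
    by have := hφ.hasFDerivAt.comp x (u1.prodMk u2); exact this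
  have uA : HasFDerivAt (fun a : (Fin m ⊕ Fin n) → ℝ => A (a ∘ Sum.inl) y₁)
      (DA.comp (resL m n)) x := by have := hA.hasFDerivAt.comp x (resL m n).hasFDerivAt; exact this
  have uB : HasFDerivAt (fun a : (Fin m ⊕ Fin n) → ℝ => B (a ∘ Sum.inr) y₂)
      (DB.comp (resR m n)) x := by have := hB.hasFDerivAt.comp x (resR m n).hasFDerivAt; exact this
  have hprod := (uφ.mul uA).mul uB
  have hval := hprod.fderiv
  show fderiv ℝ _ x (Pi.single (Sum.inl b) 1) = _
  erw [hval]
  have e1 : (DK.comp (resL m n)) (Pi.single (Sum.inl b) 1) =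
      pdx (fun a c => (F₁ a c) ^ 2) b x₁ y₁ := by
    simp only [ContinuousLinearMap.comp_apply, resL_single_inl]; rfl
  have e2 : (DH.comp (resR m n)) (Pi.single (Sum.inl b) 1) = 0 := by
    simp only [ContinuousLinearMap.comp_apply, resR_single_inl, map_zero]
  have e3 : (DA.comp (resL m n)) (Pi.single (Sum.inl b) 1) = pdx A b x₁ y₁ := by
    simp only [ContinuousLinearMap.comp_apply, resL_single_inl]; rfl
  have e4 : (DB.comp (resR m n)) (Pi.single (Sum.inl b) 1) = 0 := by
    simp only [ContinuousLinearMap.comp_apply, resR_single_inl, map_zero]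
  have eφ : (Dφ.comp ((DK.comp (resL m n)).prod (DH.comp (resR m n))))
      (Pi.single (Sum.inl b) 1) =
      pdx (fun a c => (F₁ a c) ^ 2) b x₁ y₁ * pderivS φ s t := by
    rw [ContinuousLinearMap.comp_apply, ContinuousLinearMap.prod_apply, e1, e2]
    rw [show Dφ = fderiv ℝ (fun p : ℝ × ℝ => φ p.1 p.2) (s, t) from rfl]
    rw [fderiv_two_apply hφ]
    simp
  simp only [ContinuousLinearMap.add_apply, ContinuousLinearMap.smul_apply,
    ContinuousLinearMap.coe_smul', Pi.smul_apply, eφ, e3, e4, smul_eq_mul]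
  ring

/-- Master `x`-derivative, `inr` direction. -/
lemma master_pdx_inr (φ : ℝ → ℝ → ℝ)
    (A : (Fin m → ℝ) → (Fin m → ℝ) → ℝ) (B : (Fin n → ℝ) → (Fin n → ℝ) → ℝ)
    {x y : (Fin m ⊕ Fin n) → ℝ}
    (hφ : DifferentiableAt ℝ (fun p : ℝ × ℝ => φ p.1 p.2)
      ((F₁ (x ∘ Sum.inl) (y ∘ Sum.inl)) ^ 2, (F₂ (x ∘ Sum.inr) (y ∘ Sum.inr)) ^ 2))
    (hK : DifferentiableAt ℝ (fun a => (F₁ a (y ∘ Sum.inl)) ^ 2) (x ∘ Sum.inl))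
    (hH : DifferentiableAt ℝ (fun a => (F₂ a (y ∘ Sum.inr)) ^ 2) (x ∘ Sum.inr))
    (hA : DifferentiableAt ℝ (fun a => A a (y ∘ Sum.inl)) (x ∘ Sum.inl))
    (hB : DifferentiableAt ℝ (fun a => B a (y ∘ Sum.inr)) (x ∘ Sum.inr))
    (b : Fin n) :
    pdx (fun x' y' => φ ((F₁ (x' ∘ Sum.inl) (y' ∘ Sum.inl)) ^ 2)
        ((F₂ (x' ∘ Sum.inr) (y' ∘ Sum.inr)) ^ 2) *
        A (x' ∘ Sum.inl) (y' ∘ Sum.inl) * B (x' ∘ Sum.inr) (y' ∘ Sum.inr))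
      (Sum.inr b) x y =
    pderivT φ ((F₁ (x ∘ Sum.inl) (y ∘ Sum.inl)) ^ 2) ((F₂ (x ∘ Sum.inr) (y ∘ Sum.inr)) ^ 2) *
        pdx (fun a c => (F₂ a c) ^ 2) b (x ∘ Sum.inr) (y ∘ Sum.inr) *
        A (x ∘ Sum.inl) (y ∘ Sum.inl) * B (x ∘ Sum.inr) (y ∘ Sum.inr) +
      φ ((F₁ (x ∘ Sum.inl) (y ∘ Sum.inl)) ^ 2) ((F₂ (x ∘ Sum.inr) (y ∘ Sum.inr)) ^ 2) *
        A (x ∘ Sum.inl) (y ∘ Sum.inl) * pdx B b (x ∘ Sum.inr) (y ∘ Sum.inr) := by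
  set x₁ := x ∘ Sum.inl
  set x₂ := x ∘ Sum.inr
  set y₁ := y ∘ Sum.inl
  set y₂ := y ∘ Sum.inr
  set s := (F₁ x₁ y₁) ^ 2
  set t := (F₂ x₂ y₂) ^ 2
  set DK := fderiv ℝ (fun a => (F₁ a y₁) ^ 2) x₁
  set DH := fderiv ℝ (fun a => (F₂ a y₂) ^ 2) x₂
  set DA := fderiv ℝ (fun a => A a y₁) x₁
  set DB := fderiv ℝ (fun a => B a y₂) x₂
  set Dφ := fderiv ℝ (fun p : ℝ × ℝ => φ p.1 p.2) (s, t)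
  have u1 : HasFDerivAt (fun a : (Fin m ⊕ Fin n) → ℝ => (F₁ (a ∘ Sum.inl) y₁) ^ 2)
      (DK.comp (resL m n)) x := by have := hK.hasFDerivAt.comp x (resL m n).hasFDerivAt; exact this
  have u2 : HasFDerivAt (fun a : (Fin m ⊕ Fin n) → ℝ => (F₂ (a ∘ Sum.inr) y₂) ^ 2)
      (DH.comp (resR m n)) x := by have := hH.hasFDerivAt.comp x (resR m n).hasFDerivAt; exact this
  have uφ : HasFDerivAt (fun a : (Fin m ⊕ Fin n) → ℝ =>
      φ ((F₁ (a ∘ Sum.inl) y₁) ^ 2) ((F₂ (a ∘ Sum.inr) y₂) ^ 2))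
      (Dφ.comp ((DK.comp (resL m n)).prod (DH.comp (resR m n)))) x :=
    by have := hφ.hasFDerivAt.comp x (u1.prodMk u2); exact this
  have uA : HasFDerivAt (fun a : (Fin m ⊕ Fin n) → ℝ => A (a ∘ Sum.inl) y₁)
      (DA.comp (resL m n)) x := by have := hA.hasFDerivAt.comp x (resL m n).hasFDerivAt; exact this
  have uB : HasFDerivAt (fun a : (Fin m ⊕ Fin n) → ℝ => B (a ∘ Sum.inr) y₂)
      (DB.comp (resR m n)) x := by have := hB.hasFDerivAt.comp x (resR m n).hasFDerivAt; exact this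
  have hprod := (uφ.mul uA).mul uB
  have hval := hprod.fderiv
  show fderiv ℝ _ x (Pi.single (Sum.inr b) 1) = _
  erw [hval]
  have e1 : (DK.comp (resL m n)) (Pi.single (Sum.inr b) 1) = 0 := by
    simp only [ContinuousLinearMap.comp_apply, resL_single_inr, map_zero]
  have e2 : (DH.comp (resR m n)) (Pi.single (Sum.inr b) 1) =
      pdx (fun a c => (F₂ a c) ^ 2) b x₂ y₂ := by
    simp only [ContinuousLinearMap.comp_apply, resR_single_inr]; rfl
  have e3 : (DA.comp (resL m n)) (Pi.single (Sum.inr b) 1) = 0 := by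
    simp only [ContinuousLinearMap.comp_apply, resL_single_inr, map_zero]
  have e4 : (DB.comp (resR m n)) (Pi.single (Sum.inr b) 1) = pdx B b x₂ y₂ := by
    simp only [ContinuousLinearMap.comp_apply, resR_single_inr]; rfl
  have eφ : (Dφ.comp ((DK.comp (resL m n)).prod (DH.comp (resR m n))))
      (Pi.single (Sum.inr b) 1) =
      pdx (fun a c => (F₂ a c) ^ 2) b x₂ y₂ * pderivT φ s t := by
    rw [ContinuousLinearMap.comp_apply, ContinuousLinearMap.prod_apply, e1, e2]
    rw [show Dφ = fderiv ℝ (fun p : ℝ × ℝ => φ p.1 p.2) (s, t) from rfl]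
    rw [fderiv_two_apply hφ]
    simp
  simp only [ContinuousLinearMap.add_apply, ContinuousLinearMap.smul_apply,
    ContinuousLinearMap.coe_smul', Pi.smul_apply, eφ, e3, e4, smul_eq_mul, Pi.mul_apply]
  ring

end Masters
section ProductD

open Function Filter

variable {m n : ℕ} {U₁ : Set (Fin m → ℝ)} {U₂ : Set (Fin n → ℝ)}
  {F₁ : (Fin m → ℝ) → (Fin m → ℝ) → ℝ} {F₂ : (Fin n → ℝ) → (Fin n → ℝ) → ℝ}
  {f : ℝ → ℝ → ℝ} {F : (Fin m ⊕ Fin n → ℝ) → (Fin m ⊕ Fin n → ℝ) → ℝ}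

/-- The good set of base/fiber pairs. -/
def goodSet (U₁ : Set (Fin m → ℝ)) (U₂ : Set (Fin n → ℝ)) :
    Set (((Fin m ⊕ Fin n) → ℝ) × ((Fin m ⊕ Fin n) → ℝ)) :=
  {p | p.1 ∘ Sum.inl ∈ U₁ ∧ p.1 ∘ Sum.inr ∈ U₂ ∧ p.2 ∘ Sum.inl ≠ 0 ∧ p.2 ∘ Sum.inr ≠ 0}

lemma isOpen_goodSet (h1 : IsOpen U₁) (h2 : IsOpen U₂) : IsOpen (goodSet U₁ U₂) := by
  have c1 : Continuous (fun p : ((Fin m ⊕ Fin n) → ℝ) × ((Fin m ⊕ Fin n) → ℝ) =>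
      resL m n p.1) := (resL m n).continuous.comp continuous_fst
  have c2 : Continuous (fun p : ((Fin m ⊕ Fin n) → ℝ) × ((Fin m ⊕ Fin n) → ℝ) =>
      resR m n p.1) := (resR m n).continuous.comp continuous_fst
  have c3 : Continuous (fun p : ((Fin m ⊕ Fin n) → ℝ) × ((Fin m ⊕ Fin n) → ℝ) =>
      resL m n p.2) := (resL m n).continuous.comp continuous_snd
  have c4 : Continuous (fun p : ((Fin m ⊕ Fin n) → ℝ) × ((Fin m ⊕ Fin n) → ℝ) =>
      resR m n p.2) := (resR m n).continuous.comp continuous_snd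
  exact ((h1.preimage c1).inter ((h2.preimage c2).inter
    (((isOpen_ne : IsOpen {v : Fin m → ℝ | v ≠ 0}).preimage c3).inter
      ((isOpen_ne : IsOpen {v : Fin n → ℝ | v ≠ 0}).preimage c4))))

namespace MinkProd

variable (hp : IsMinkowskianProduct U₁ U₂ F₁ F₂ f F)
include hp

lemma sq_eq : ∀ x y : (Fin m ⊕ Fin n) → ℝ,
    (F x y) ^ 2 = f ((F₁ (x ∘ Sum.inl) (y ∘ Sum.inl)) ^ 2)
      ((F₂ (x ∘ Sum.inr) (y ∘ Sum.inr)) ^ 2) := by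
  intro x y
  rw [hp.F_def x y, Real.sq_sqrt]
  exact hp.f_nonneg _ (Set.mem_Ici.mpr (sq_nonneg _)) _ (Set.mem_Ici.mpr (sq_nonneg _))

variable {x y : (Fin m ⊕ Fin n) → ℝ}

lemma f_contDiffAt (hx1 : x ∘ Sum.inl ∈ U₁) (hx2 : x ∘ Sum.inr ∈ U₂)
    (hy1 : y ∘ Sum.inl ≠ 0) (hy2 : y ∘ Sum.inr ≠ 0) :
    ContDiffAt ℝ (⊤:ℕ∞) (fun p : ℝ × ℝ => f p.1 p.2)
      ((F₁ (x ∘ Sum.inl) (y ∘ Sum.inl)) ^ 2, (F₂ (x ∘ Sum.inr) (y ∘ Sum.inr)) ^ 2) := by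
  apply hp.f_smooth.contDiffAt
  apply (isOpen_Ioi.prod isOpen_Ioi).mem_nhds
  exact ⟨pow_pos (hp.finsler₁.pos _ hx1 _ hy1) 2, pow_pos (hp.finsler₂.pos _ hx2 _ hy2) 2⟩

/-- D1, `inl` case. -/
lemma D1L (hx1 : x ∘ Sum.inl ∈ U₁) (hx2 : x ∘ Sum.inr ∈ U₂)
    (hy1 : y ∘ Sum.inl ≠ 0) (hy2 : y ∘ Sum.inr ≠ 0) (b : Fin m) :
    pdy (fun x' y' => (F x' y') ^ 2) (Sum.inl b) x y =
      pderivS f ((F₁ (x ∘ Sum.inl) (y ∘ Sum.inl)) ^ 2) ((F₂ (x ∘ Sum.inr) (y ∘ Sum.inr)) ^ 2) *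
        pdy (fun a c => (F₁ a c) ^ 2) b (x ∘ Sum.inl) (y ∘ Sum.inl) := by
  have hrw : (fun x' y' : (Fin m ⊕ Fin n) → ℝ => (F x' y') ^ 2) =
      fun x' y' => f ((F₁ (x' ∘ Sum.inl) (y' ∘ Sum.inl)) ^ 2)
          ((F₂ (x' ∘ Sum.inr) (y' ∘ Sum.inr)) ^ 2) *
        (fun (_ : Fin m → ℝ) (_ : Fin m → ℝ) => (1:ℝ)) (x' ∘ Sum.inl) (y' ∘ Sum.inl) *
        (fun (_ : Fin n → ℝ) (_ : Fin n → ℝ) => (1:ℝ)) (x' ∘ Sum.inr) (y' ∘ Sum.inr) := by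
    funext x' y'
    rw [sq_eq hp x' y']
    ring
  rw [hrw, master_pdy_inl f (fun (_ : Fin m → ℝ) (_ : Fin m → ℝ) => (1:ℝ)) (fun (_ : Fin n → ℝ) (_ : Fin n → ℝ) => (1:ℝ))
    ((f_contDiffAt hp hx1 hx2 hy1 hy2).differentiableAt (by simp))
    (hp.finsler₁.diffY hx1 hy1) (hp.finsler₂.diffY hx2 hy2)
    (differentiableAt_const 1) (differentiableAt_const 1) b]
  have hz : pdy (fun (_ : Fin m → ℝ) (_ : Fin m → ℝ) => (1:ℝ)) b
      (x ∘ Sum.inl) (y ∘ Sum.inl) = 0 := by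
    simp [pdy]
  rw [hz]
  ring

/-- D1, `inr` case. -/
lemma D1R (hx1 : x ∘ Sum.inl ∈ U₁) (hx2 : x ∘ Sum.inr ∈ U₂)
    (hy1 : y ∘ Sum.inl ≠ 0) (hy2 : y ∘ Sum.inr ≠ 0) (b : Fin n) :
    pdy (fun x' y' => (F x' y') ^ 2) (Sum.inr b) x y =
      pderivT f ((F₁ (x ∘ Sum.inl) (y ∘ Sum.inl)) ^ 2) ((F₂ (x ∘ Sum.inr) (y ∘ Sum.inr)) ^ 2) *
        pdy (fun a c => (F₂ a c) ^ 2) b (x ∘ Sum.inr) (y ∘ Sum.inr) := by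
  have hrw : (fun x' y' : (Fin m ⊕ Fin n) → ℝ => (F x' y') ^ 2) =
      fun x' y' => f ((F₁ (x' ∘ Sum.inl) (y' ∘ Sum.inl)) ^ 2)
          ((F₂ (x' ∘ Sum.inr) (y' ∘ Sum.inr)) ^ 2) *
        (fun (_ : Fin m → ℝ) (_ : Fin m → ℝ) => (1:ℝ)) (x' ∘ Sum.inl) (y' ∘ Sum.inl) *
        (fun (_ : Fin n → ℝ) (_ : Fin n → ℝ) => (1:ℝ)) (x' ∘ Sum.inr) (y' ∘ Sum.inr) := by
    funext x' y'
    rw [sq_eq hp x' y']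
    ring
  rw [hrw, master_pdy_inr f (fun (_ : Fin m → ℝ) (_ : Fin m → ℝ) => (1:ℝ)) (fun (_ : Fin n → ℝ) (_ : Fin n → ℝ) => (1:ℝ))
    ((f_contDiffAt hp hx1 hx2 hy1 hy2).differentiableAt (by simp))
    (hp.finsler₁.diffY hx1 hy1) (hp.finsler₂.diffY hx2 hy2)
    (differentiableAt_const 1) (differentiableAt_const 1) b]
  have hz : pdy (fun (_ : Fin n → ℝ) (_ : Fin n → ℝ) => (1:ℝ)) b
      (x ∘ Sum.inr) (y ∘ Sum.inr) = 0 := by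
    simp [pdy]
  rw [hz]
  ring

/-- D5, `inl` case. -/
lemma D5L (hx1 : x ∘ Sum.inl ∈ U₁) (hx2 : x ∘ Sum.inr ∈ U₂)
    (hy1 : y ∘ Sum.inl ≠ 0) (hy2 : y ∘ Sum.inr ≠ 0) (c : Fin m) :
    pdx (fun x' y' => (F x' y') ^ 2) (Sum.inl c) x y =
      pderivS f ((F₁ (x ∘ Sum.inl) (y ∘ Sum.inl)) ^ 2) ((F₂ (x ∘ Sum.inr) (y ∘ Sum.inr)) ^ 2) *
        pdx (fun a c' => (F₁ a c') ^ 2) c (x ∘ Sum.inl) (y ∘ Sum.inl) := by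
  have hrw : (fun x' y' : (Fin m ⊕ Fin n) → ℝ => (F x' y') ^ 2) =
      fun x' y' => f ((F₁ (x' ∘ Sum.inl) (y' ∘ Sum.inl)) ^ 2)
          ((F₂ (x' ∘ Sum.inr) (y' ∘ Sum.inr)) ^ 2) *
        (fun (_ : Fin m → ℝ) (_ : Fin m → ℝ) => (1:ℝ)) (x' ∘ Sum.inl) (y' ∘ Sum.inl) *
        (fun (_ : Fin n → ℝ) (_ : Fin n → ℝ) => (1:ℝ)) (x' ∘ Sum.inr) (y' ∘ Sum.inr) := by
    funext x' y'
    rw [sq_eq hp x' y']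
    ring
  rw [hrw, master_pdx_inl f (fun (_ : Fin m → ℝ) (_ : Fin m → ℝ) => (1:ℝ)) (fun (_ : Fin n → ℝ) (_ : Fin n → ℝ) => (1:ℝ))
    ((f_contDiffAt hp hx1 hx2 hy1 hy2).differentiableAt (by simp))
    (hp.finsler₁.diffX hx1 hy1) (hp.finsler₂.diffX hx2 hy2)
    (differentiableAt_const 1) (differentiableAt_const 1) c]
  have hz : pdx (fun (_ : Fin m → ℝ) (_ : Fin m → ℝ) => (1:ℝ)) c
      (x ∘ Sum.inl) (y ∘ Sum.inl) = 0 := by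
    simp [pdx]
  rw [hz]
  ring

/-- D5, `inr` case. -/
lemma D5R (hx1 : x ∘ Sum.inl ∈ U₁) (hx2 : x ∘ Sum.inr ∈ U₂)
    (hy1 : y ∘ Sum.inl ≠ 0) (hy2 : y ∘ Sum.inr ≠ 0) (c : Fin n) :
    pdx (fun x' y' => (F x' y') ^ 2) (Sum.inr c) x y =
      pderivT f ((F₁ (x ∘ Sum.inl) (y ∘ Sum.inl)) ^ 2) ((F₂ (x ∘ Sum.inr) (y ∘ Sum.inr)) ^ 2) *
        pdx (fun a c' => (F₂ a c') ^ 2) c (x ∘ Sum.inr) (y ∘ Sum.inr) := by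
  have hrw : (fun x' y' : (Fin m ⊕ Fin n) → ℝ => (F x' y') ^ 2) =
      fun x' y' => f ((F₁ (x' ∘ Sum.inl) (y' ∘ Sum.inl)) ^ 2)
          ((F₂ (x' ∘ Sum.inr) (y' ∘ Sum.inr)) ^ 2) *
        (fun (_ : Fin m → ℝ) (_ : Fin m → ℝ) => (1:ℝ)) (x' ∘ Sum.inl) (y' ∘ Sum.inl) *
        (fun (_ : Fin n → ℝ) (_ : Fin n → ℝ) => (1:ℝ)) (x' ∘ Sum.inr) (y' ∘ Sum.inr) := by
    funext x' y'
    rw [sq_eq hp x' y']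
    ring
  rw [hrw, master_pdx_inr f (fun (_ : Fin m → ℝ) (_ : Fin m → ℝ) => (1:ℝ)) (fun (_ : Fin n → ℝ) (_ : Fin n → ℝ) => (1:ℝ))
    ((f_contDiffAt hp hx1 hx2 hy1 hy2).differentiableAt (by simp))
    (hp.finsler₁.diffX hx1 hy1) (hp.finsler₂.diffX hx2 hy2)
    (differentiableAt_const 1) (differentiableAt_const 1) c]
  have hz : pdx (fun (_ : Fin n → ℝ) (_ : Fin n → ℝ) => (1:ℝ)) c
      (x ∘ Sum.inr) (y ∘ Sum.inr) = 0 := by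
    simp [pdx]
  rw [hz]
  ring

end MinkProd
end ProductD
section ProductD2

open Function Filter

variable {m n : ℕ} {U₁ : Set (Fin m → ℝ)} {U₂ : Set (Fin n → ℝ)}
  {F₁ : (Fin m → ℝ) → (Fin m → ℝ) → ℝ} {F₂ : (Fin n → ℝ) → (Fin n → ℝ) → ℝ}
  {f : ℝ → ℝ → ℝ} {F : (Fin m ⊕ Fin n → ℝ) → (Fin m ⊕ Fin n → ℝ) → ℝ}

namespace MinkProd

variable (hp : IsMinkowskianProduct U₁ U₂ F₁ F₂ f F)
include hp

variable {x y : (Fin m ⊕ Fin n) → ℝ}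

lemma mem_goodSet_nhds (hx1 : x ∘ Sum.inl ∈ U₁) (hx2 : x ∘ Sum.inr ∈ U₂)
    (hy1 : y ∘ Sum.inl ≠ 0) (hy2 : y ∘ Sum.inr ≠ 0) :
    ∀ᶠ p in nhds ((x, y) : ((Fin m ⊕ Fin n) → ℝ) × ((Fin m ⊕ Fin n) → ℝ)),
      p ∈ goodSet U₁ U₂ := by
  exact (isOpen_goodSet hp.finsler₁.isOpen hp.finsler₂.isOpen).mem_nhds
    (show ((x, y) : _ × _) ∈ goodSet U₁ U₂ from ⟨hx1, hx2, hy1, hy2⟩)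

/-- D2 : `G_{(inl b)(inl c)}`. -/
lemma D2 (hx1 : x ∘ Sum.inl ∈ U₁) (hx2 : x ∘ Sum.inr ∈ U₂)
    (hy1 : y ∘ Sum.inl ≠ 0) (hy2 : y ∘ Sum.inr ≠ 0) (b c : Fin m) :
    pdy (pdy (fun x' y' => (F x' y') ^ 2) (Sum.inl c)) (Sum.inl b) x y =
      pderivS (fun u v => pderivS f u v) ((F₁ (x ∘ Sum.inl) (y ∘ Sum.inl)) ^ 2)
          ((F₂ (x ∘ Sum.inr) (y ∘ Sum.inr)) ^ 2) *
        pdy (fun a c' => (F₁ a c') ^ 2) b (x ∘ Sum.inl) (y ∘ Sum.inl) *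
        pdy (fun a c' => (F₁ a c') ^ 2) c (x ∘ Sum.inl) (y ∘ Sum.inl) +
      pderivS f ((F₁ (x ∘ Sum.inl) (y ∘ Sum.inl)) ^ 2) ((F₂ (x ∘ Sum.inr) (y ∘ Sum.inr)) ^ 2) *
        pdy (pdy (fun a c' => (F₁ a c') ^ 2) c) b (x ∘ Sum.inl) (y ∘ Sum.inl) := by
  have hcongr := pdy_congr (u := pdy (fun x' y' => (F x' y') ^ 2) (Sum.inl c))
    (v := fun x' y' => pderivS f ((F₁ (x' ∘ Sum.inl) (y' ∘ Sum.inl)) ^ 2)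
        ((F₂ (x' ∘ Sum.inr) (y' ∘ Sum.inr)) ^ 2) *
      pdy (fun a c' => (F₁ a c') ^ 2) c (x' ∘ Sum.inl) (y' ∘ Sum.inl) *
      (fun (_ : Fin n → ℝ) (_ : Fin n → ℝ) => (1:ℝ)) (x' ∘ Sum.inr) (y' ∘ Sum.inr))
    (x := x) (y := y) (Sum.inl b) ?_
  · rw [hcongr, master_pdy_inl (fun u v => pderivS f u v)
      (pdy (fun a c' => (F₁ a c') ^ 2) c)
      (fun (_ : Fin n → ℝ) (_ : Fin n → ℝ) => (1:ℝ))
      ((contDiffAt_pderivS (f_contDiffAt hp hx1 hx2 hy1 hy2)).differentiableAt (by simp))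
      (hp.finsler₁.diffY hx1 hy1) (hp.finsler₂.diffY hx2 hy2)
      (hp.finsler₁.pdy_diffY hx1 hy1 c) (differentiableAt_const 1) b]
    ring_nf
  · filter_upwards [mem_goodSet_nhds hp hx1 hx2 hy1 hy2] with p hq
    exact (D1L hp hq.1 hq.2.1 hq.2.2.1 hq.2.2.2 c).trans (mul_one _).symm

end MinkProd
end ProductD2
section ProductD3

open Function Filter

variable {m n : ℕ} {U₁ : Set (Fin m → ℝ)} {U₂ : Set (Fin n → ℝ)}
  {F₁ : (Fin m → ℝ) → (Fin m → ℝ) → ℝ} {F₂ : (Fin n → ℝ) → (Fin n → ℝ) → ℝ}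
  {f : ℝ → ℝ → ℝ} {F : (Fin m ⊕ Fin n → ℝ) → (Fin m ⊕ Fin n → ℝ) → ℝ}

namespace MinkProd

variable (hp : IsMinkowskianProduct U₁ U₂ F₁ F₂ f F)
include hp

variable {x y : (Fin m ⊕ Fin n) → ℝ}

/-- D3 : `G_{(inl b)(inr c')}`. -/
lemma D3 (hx1 : x ∘ Sum.inl ∈ U₁) (hx2 : x ∘ Sum.inr ∈ U₂)
    (hy1 : y ∘ Sum.inl ≠ 0) (hy2 : y ∘ Sum.inr ≠ 0) (b : Fin m) (c : Fin n) :
    pdy (pdy (fun x' y' => (F x' y') ^ 2) (Sum.inr c)) (Sum.inl b) x y =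
      pderivS (fun u v => pderivT f u v) ((F₁ (x ∘ Sum.inl) (y ∘ Sum.inl)) ^ 2)
          ((F₂ (x ∘ Sum.inr) (y ∘ Sum.inr)) ^ 2) *
        pdy (fun a c' => (F₁ a c') ^ 2) b (x ∘ Sum.inl) (y ∘ Sum.inl) *
        pdy (fun a c' => (F₂ a c') ^ 2) c (x ∘ Sum.inr) (y ∘ Sum.inr) := by
  have hcongr := pdy_congr (u := pdy (fun x' y' => (F x' y') ^ 2) (Sum.inr c))
    (v := fun x' y' => pderivT f ((F₁ (x' ∘ Sum.inl) (y' ∘ Sum.inl)) ^ 2)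
        ((F₂ (x' ∘ Sum.inr) (y' ∘ Sum.inr)) ^ 2) *
      (fun (_ : Fin m → ℝ) (_ : Fin m → ℝ) => (1:ℝ)) (x' ∘ Sum.inl) (y' ∘ Sum.inl) *
      pdy (fun a c' => (F₂ a c') ^ 2) c (x' ∘ Sum.inr) (y' ∘ Sum.inr))
    (x := x) (y := y) (Sum.inl b) ?_
  · rw [hcongr, master_pdy_inl (fun u v => pderivT f u v)
      (fun (_ : Fin m → ℝ) (_ : Fin m → ℝ) => (1:ℝ))
      (pdy (fun a c' => (F₂ a c') ^ 2) c)
      ((contDiffAt_pderivT (f_contDiffAt hp hx1 hx2 hy1 hy2)).differentiableAt (by simp))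
      (hp.finsler₁.diffY hx1 hy1) (hp.finsler₂.diffY hx2 hy2)
      (differentiableAt_const 1) (hp.finsler₂.pdy_diffY hx2 hy2 c) b]
    have hz : pdy (fun (_ : Fin m → ℝ) (_ : Fin m → ℝ) => (1:ℝ)) b
        (x ∘ Sum.inl) (y ∘ Sum.inl) = 0 := by simp [pdy]
    rw [hz]
    ring_nf
  · filter_upwards [mem_goodSet_nhds hp hx1 hx2 hy1 hy2] with p hq
    exact (D1R hp hq.1 hq.2.1 hq.2.2.1 hq.2.2.2 c).trans (by ring)

/-- D3' : `G_{(inr b)(inl c)}`. -/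
lemma D3' (hx1 : x ∘ Sum.inl ∈ U₁) (hx2 : x ∘ Sum.inr ∈ U₂)
    (hy1 : y ∘ Sum.inl ≠ 0) (hy2 : y ∘ Sum.inr ≠ 0) (b : Fin n) (c : Fin m) :
    pdy (pdy (fun x' y' => (F x' y') ^ 2) (Sum.inl c)) (Sum.inr b) x y =
      pderivT (fun u v => pderivS f u v) ((F₁ (x ∘ Sum.inl) (y ∘ Sum.inl)) ^ 2)
          ((F₂ (x ∘ Sum.inr) (y ∘ Sum.inr)) ^ 2) *
        pdy (fun a c' => (F₂ a c') ^ 2) b (x ∘ Sum.inr) (y ∘ Sum.inr) *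
        pdy (fun a c' => (F₁ a c') ^ 2) c (x ∘ Sum.inl) (y ∘ Sum.inl) := by
  have hcongr := pdy_congr (u := pdy (fun x' y' => (F x' y') ^ 2) (Sum.inl c))
    (v := fun x' y' => pderivS f ((F₁ (x' ∘ Sum.inl) (y' ∘ Sum.inl)) ^ 2)
        ((F₂ (x' ∘ Sum.inr) (y' ∘ Sum.inr)) ^ 2) *
      pdy (fun a c' => (F₁ a c') ^ 2) c (x' ∘ Sum.inl) (y' ∘ Sum.inl) *
      (fun (_ : Fin n → ℝ) (_ : Fin n → ℝ) => (1:ℝ)) (x' ∘ Sum.inr) (y' ∘ Sum.inr))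
    (x := x) (y := y) (Sum.inr b) ?_
  · rw [hcongr, master_pdy_inr (fun u v => pderivS f u v)
      (pdy (fun a c' => (F₁ a c') ^ 2) c)
      (fun (_ : Fin n → ℝ) (_ : Fin n → ℝ) => (1:ℝ))
      ((contDiffAt_pderivS (f_contDiffAt hp hx1 hx2 hy1 hy2)).differentiableAt (by simp))
      (hp.finsler₁.diffY hx1 hy1) (hp.finsler₂.diffY hx2 hy2)
      (hp.finsler₁.pdy_diffY hx1 hy1 c) (differentiableAt_const 1) b]
    have hz : pdy (fun (_ : Fin n → ℝ) (_ : Fin n → ℝ) => (1:ℝ)) b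
        (x ∘ Sum.inr) (y ∘ Sum.inr) = 0 := by simp [pdy]
    rw [hz]
    ring_nf
  · filter_upwards [mem_goodSet_nhds hp hx1 hx2 hy1 hy2] with p hq
    exact (D1L hp hq.1 hq.2.1 hq.2.2.1 hq.2.2.2 c).trans (by ring)

/-- D4 : `G_{(inr b)(inr c)}`. -/
lemma D4 (hx1 : x ∘ Sum.inl ∈ U₁) (hx2 : x ∘ Sum.inr ∈ U₂)
    (hy1 : y ∘ Sum.inl ≠ 0) (hy2 : y ∘ Sum.inr ≠ 0) (b c : Fin n) :
    pdy (pdy (fun x' y' => (F x' y') ^ 2) (Sum.inr c)) (Sum.inr b) x y =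
      pderivT (fun u v => pderivT f u v) ((F₁ (x ∘ Sum.inl) (y ∘ Sum.inl)) ^ 2)
          ((F₂ (x ∘ Sum.inr) (y ∘ Sum.inr)) ^ 2) *
        pdy (fun a c' => (F₂ a c') ^ 2) b (x ∘ Sum.inr) (y ∘ Sum.inr) *
        pdy (fun a c' => (F₂ a c') ^ 2) c (x ∘ Sum.inr) (y ∘ Sum.inr) +
      pderivT f ((F₁ (x ∘ Sum.inl) (y ∘ Sum.inl)) ^ 2) ((F₂ (x ∘ Sum.inr) (y ∘ Sum.inr)) ^ 2) *
        pdy (pdy (fun a c' => (F₂ a c') ^ 2) c) b (x ∘ Sum.inr) (y ∘ Sum.inr) := by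
  have hcongr := pdy_congr (u := pdy (fun x' y' => (F x' y') ^ 2) (Sum.inr c))
    (v := fun x' y' => pderivT f ((F₁ (x' ∘ Sum.inl) (y' ∘ Sum.inl)) ^ 2)
        ((F₂ (x' ∘ Sum.inr) (y' ∘ Sum.inr)) ^ 2) *
      (fun (_ : Fin m → ℝ) (_ : Fin m → ℝ) => (1:ℝ)) (x' ∘ Sum.inl) (y' ∘ Sum.inl) *
      pdy (fun a c' => (F₂ a c') ^ 2) c (x' ∘ Sum.inr) (y' ∘ Sum.inr))
    (x := x) (y := y) (Sum.inr b) ?_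
  · rw [hcongr, master_pdy_inr (fun u v => pderivT f u v)
      (fun (_ : Fin m → ℝ) (_ : Fin m → ℝ) => (1:ℝ))
      (pdy (fun a c' => (F₂ a c') ^ 2) c)
      ((contDiffAt_pderivT (f_contDiffAt hp hx1 hx2 hy1 hy2)).differentiableAt (by simp))
      (hp.finsler₁.diffY hx1 hy1) (hp.finsler₂.diffY hx2 hy2)
      (differentiableAt_const 1) (hp.finsler₂.pdy_diffY hx2 hy2 c) b]
    ring_nf
  · filter_upwards [mem_goodSet_nhds hp hx1 hx2 hy1 hy2] with p hq
    exact (D1R hp hq.1 hq.2.1 hq.2.2.1 hq.2.2.2 c).trans (by ring)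

/-- D6 : mixed `x`-`y` second derivative, both `inl`. -/
lemma D6 (hx1 : x ∘ Sum.inl ∈ U₁) (hx2 : x ∘ Sum.inr ∈ U₂)
    (hy1 : y ∘ Sum.inl ≠ 0) (hy2 : y ∘ Sum.inr ≠ 0) (b c : Fin m) :
    pdx (pdy (fun x' y' => (F x' y') ^ 2) (Sum.inl b)) (Sum.inl c) x y =
      pderivS (fun u v => pderivS f u v) ((F₁ (x ∘ Sum.inl) (y ∘ Sum.inl)) ^ 2)
          ((F₂ (x ∘ Sum.inr) (y ∘ Sum.inr)) ^ 2) *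
        pdx (fun a c' => (F₁ a c') ^ 2) c (x ∘ Sum.inl) (y ∘ Sum.inl) *
        pdy (fun a c' => (F₁ a c') ^ 2) b (x ∘ Sum.inl) (y ∘ Sum.inl) +
      pderivS f ((F₁ (x ∘ Sum.inl) (y ∘ Sum.inl)) ^ 2) ((F₂ (x ∘ Sum.inr) (y ∘ Sum.inr)) ^ 2) *
        pdx (pdy (fun a c' => (F₁ a c') ^ 2) b) c (x ∘ Sum.inl) (y ∘ Sum.inl) := by
  have hcongr := pdx_congr (u := pdy (fun x' y' => (F x' y') ^ 2) (Sum.inl b))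
    (v := fun x' y' => pderivS f ((F₁ (x' ∘ Sum.inl) (y' ∘ Sum.inl)) ^ 2)
        ((F₂ (x' ∘ Sum.inr) (y' ∘ Sum.inr)) ^ 2) *
      pdy (fun a c' => (F₁ a c') ^ 2) b (x' ∘ Sum.inl) (y' ∘ Sum.inl) *
      (fun (_ : Fin n → ℝ) (_ : Fin n → ℝ) => (1:ℝ)) (x' ∘ Sum.inr) (y' ∘ Sum.inr))
    (x := x) (y := y) (Sum.inl c) ?_
  · rw [hcongr, master_pdx_inl (fun u v => pderivS f u v)
      (pdy (fun a c' => (F₁ a c') ^ 2) b)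
      (fun (_ : Fin n → ℝ) (_ : Fin n → ℝ) => (1:ℝ))
      ((contDiffAt_pderivS (f_contDiffAt hp hx1 hx2 hy1 hy2)).differentiableAt (by simp))
      (hp.finsler₁.diffX hx1 hy1) (hp.finsler₂.diffX hx2 hy2)
      (hp.finsler₁.pdy_diffX hx1 hy1 b) (differentiableAt_const 1) c]
    ring_nf
  · filter_upwards [mem_goodSet_nhds hp hx1 hx2 hy1 hy2] with p hq
    exact (D1L hp hq.1 hq.2.1 hq.2.2.1 hq.2.2.2 b).trans (by ring)

/-- D7 : mixed second derivative, `y` in `inl`, `x` in `inr`. -/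
lemma D7 (hx1 : x ∘ Sum.inl ∈ U₁) (hx2 : x ∘ Sum.inr ∈ U₂)
    (hy1 : y ∘ Sum.inl ≠ 0) (hy2 : y ∘ Sum.inr ≠ 0) (b : Fin m) (c : Fin n) :
    pdx (pdy (fun x' y' => (F x' y') ^ 2) (Sum.inl b)) (Sum.inr c) x y =
      pderivT (fun u v => pderivS f u v) ((F₁ (x ∘ Sum.inl) (y ∘ Sum.inl)) ^ 2)
          ((F₂ (x ∘ Sum.inr) (y ∘ Sum.inr)) ^ 2) *
        pdx (fun a c' => (F₂ a c') ^ 2) c (x ∘ Sum.inr) (y ∘ Sum.inr) *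
        pdy (fun a c' => (F₁ a c') ^ 2) b (x ∘ Sum.inl) (y ∘ Sum.inl) := by
  have hcongr := pdx_congr (u := pdy (fun x' y' => (F x' y') ^ 2) (Sum.inl b))
    (v := fun x' y' => pderivS f ((F₁ (x' ∘ Sum.inl) (y' ∘ Sum.inl)) ^ 2)
        ((F₂ (x' ∘ Sum.inr) (y' ∘ Sum.inr)) ^ 2) *
      pdy (fun a c' => (F₁ a c') ^ 2) b (x' ∘ Sum.inl) (y' ∘ Sum.inl) *
      (fun (_ : Fin n → ℝ) (_ : Fin n → ℝ) => (1:ℝ)) (x' ∘ Sum.inr) (y' ∘ Sum.inr))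
    (x := x) (y := y) (Sum.inr c) ?_
  · rw [hcongr, master_pdx_inr (fun u v => pderivS f u v)
      (pdy (fun a c' => (F₁ a c') ^ 2) b)
      (fun (_ : Fin n → ℝ) (_ : Fin n → ℝ) => (1:ℝ))
      ((contDiffAt_pderivS (f_contDiffAt hp hx1 hx2 hy1 hy2)).differentiableAt (by simp))
      (hp.finsler₁.diffX hx1 hy1) (hp.finsler₂.diffX hx2 hy2)
      (hp.finsler₁.pdy_diffX hx1 hy1 b) (differentiableAt_const 1) c]
    have hz : pdx (fun (_ : Fin n → ℝ) (_ : Fin n → ℝ) => (1:ℝ)) c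
        (x ∘ Sum.inr) (y ∘ Sum.inr) = 0 := by simp [pdx]
    rw [hz]
    ring_nf
  · filter_upwards [mem_goodSet_nhds hp hx1 hx2 hy1 hy2] with p hq
    exact (D1L hp hq.1 hq.2.1 hq.2.2.1 hq.2.2.2 b).trans (by ring)

/-- D8 : mixed second derivative, `y` in `inr`, `x` in `inl`. -/
lemma D8 (hx1 : x ∘ Sum.inl ∈ U₁) (hx2 : x ∘ Sum.inr ∈ U₂)
    (hy1 : y ∘ Sum.inl ≠ 0) (hy2 : y ∘ Sum.inr ≠ 0) (b : Fin n) (c : Fin m) :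
    pdx (pdy (fun x' y' => (F x' y') ^ 2) (Sum.inr b)) (Sum.inl c) x y =
      pderivS (fun u v => pderivT f u v) ((F₁ (x ∘ Sum.inl) (y ∘ Sum.inl)) ^ 2)
          ((F₂ (x ∘ Sum.inr) (y ∘ Sum.inr)) ^ 2) *
        pdx (fun a c' => (F₁ a c') ^ 2) c (x ∘ Sum.inl) (y ∘ Sum.inl) *
        pdy (fun a c' => (F₂ a c') ^ 2) b (x ∘ Sum.inr) (y ∘ Sum.inr) := by
  have hcongr := pdx_congr (u := pdy (fun x' y' => (F x' y') ^ 2) (Sum.inr b))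
    (v := fun x' y' => pderivT f ((F₁ (x' ∘ Sum.inl) (y' ∘ Sum.inl)) ^ 2)
        ((F₂ (x' ∘ Sum.inr) (y' ∘ Sum.inr)) ^ 2) *
      (fun (_ : Fin m → ℝ) (_ : Fin m → ℝ) => (1:ℝ)) (x' ∘ Sum.inl) (y' ∘ Sum.inl) *
      pdy (fun a c' => (F₂ a c') ^ 2) b (x' ∘ Sum.inr) (y' ∘ Sum.inr))
    (x := x) (y := y) (Sum.inl c) ?_
  · rw [hcongr, master_pdx_inl (fun u v => pderivT f u v)
      (fun (_ : Fin m → ℝ) (_ : Fin m → ℝ) => (1:ℝ))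
      (pdy (fun a c' => (F₂ a c') ^ 2) b)
      ((contDiffAt_pderivT (f_contDiffAt hp hx1 hx2 hy1 hy2)).differentiableAt (by simp))
      (hp.finsler₁.diffX hx1 hy1) (hp.finsler₂.diffX hx2 hy2)
      (differentiableAt_const 1) (hp.finsler₂.pdy_diffX hx2 hy2 b) c]
    have hz : pdx (fun (_ : Fin m → ℝ) (_ : Fin m → ℝ) => (1:ℝ)) c
        (x ∘ Sum.inl) (y ∘ Sum.inl) = 0 := by simp [pdx]
    rw [hz]
    ring_nf
  · filter_upwards [mem_goodSet_nhds hp hx1 hx2 hy1 hy2] with p hq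
    exact (D1R hp hq.1 hq.2.1 hq.2.2.1 hq.2.2.2 b).trans (by ring)

/-- D9 : mixed second derivative, both `inr`. -/
lemma D9 (hx1 : x ∘ Sum.inl ∈ U₁) (hx2 : x ∘ Sum.inr ∈ U₂)
    (hy1 : y ∘ Sum.inl ≠ 0) (hy2 : y ∘ Sum.inr ≠ 0) (b c : Fin n) :
    pdx (pdy (fun x' y' => (F x' y') ^ 2) (Sum.inr b)) (Sum.inr c) x y =
      pderivT (fun u v => pderivT f u v) ((F₁ (x ∘ Sum.inl) (y ∘ Sum.inl)) ^ 2)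
          ((F₂ (x ∘ Sum.inr) (y ∘ Sum.inr)) ^ 2) *
        pdx (fun a c' => (F₂ a c') ^ 2) c (x ∘ Sum.inr) (y ∘ Sum.inr) *
        pdy (fun a c' => (F₂ a c') ^ 2) b (x ∘ Sum.inr) (y ∘ Sum.inr) +
      pderivT f ((F₁ (x ∘ Sum.inl) (y ∘ Sum.inl)) ^ 2) ((F₂ (x ∘ Sum.inr) (y ∘ Sum.inr)) ^ 2) *
        pdx (pdy (fun a c' => (F₂ a c') ^ 2) b) c (x ∘ Sum.inr) (y ∘ Sum.inr) := by
  have hcongr := pdx_congr (u := pdy (fun x' y' => (F x' y') ^ 2) (Sum.inr b))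
    (v := fun x' y' => pderivT f ((F₁ (x' ∘ Sum.inl) (y' ∘ Sum.inl)) ^ 2)
        ((F₂ (x' ∘ Sum.inr) (y' ∘ Sum.inr)) ^ 2) *
      (fun (_ : Fin m → ℝ) (_ : Fin m → ℝ) => (1:ℝ)) (x' ∘ Sum.inl) (y' ∘ Sum.inl) *
      pdy (fun a c' => (F₂ a c') ^ 2) b (x' ∘ Sum.inr) (y' ∘ Sum.inr))
    (x := x) (y := y) (Sum.inr c) ?_
  · rw [hcongr, master_pdx_inr (fun u v => pderivT f u v)
      (fun (_ : Fin m → ℝ) (_ : Fin m → ℝ) => (1:ℝ))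
      (pdy (fun a c' => (F₂ a c') ^ 2) b)
      ((contDiffAt_pderivT (f_contDiffAt hp hx1 hx2 hy1 hy2)).differentiableAt (by simp))
      (hp.finsler₁.diffX hx1 hy1) (hp.finsler₂.diffX hx2 hy2)
      (differentiableAt_const 1) (hp.finsler₂.pdy_diffX hx2 hy2 b) c]
    ring_nf
  · filter_upwards [mem_goodSet_nhds hp hx1 hx2 hy1 hy2] with p hq
    exact (D1R hp hq.1 hq.2.1 hq.2.2.1 hq.2.2.2 b).trans (by ring)

end MinkProd
end ProductD3
section SpraySplit

open Function Filter

variable {m n : ℕ} {U₁ : Set (Fin m → ℝ)} {U₂ : Set (Fin n → ℝ)}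
  {F₁ : (Fin m → ℝ) → (Fin m → ℝ) → ℝ} {F₂ : (Fin n → ℝ) → (Fin n → ℝ) → ℝ}
  {f : ℝ → ℝ → ℝ} {F : (Fin m ⊕ Fin n → ℝ) → (Fin m ⊕ Fin n → ℝ) → ℝ}

namespace MinkProd

variable (hp : IsMinkowskianProduct U₁ U₂ F₁ F₂ f F)
include hp

variable {x y : (Fin m ⊕ Fin n) → ℝ}

/-- The candidate spray vector: the sprays of the factors. -/
noncomputable def sprayVec (F₁ : (Fin m → ℝ) → (Fin m → ℝ) → ℝ)
    (F₂ : (Fin n → ℝ) → (Fin n → ℝ) → ℝ) (x y : (Fin m ⊕ Fin n) → ℝ) :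
    (Fin m ⊕ Fin n) → ℝ :=
  Sum.elim (fun c => 2 * spray F₁ c (x ∘ Sum.inl) (y ∘ Sum.inl))
    (fun c => 2 * spray F₂ c (x ∘ Sum.inr) (y ∘ Sum.inr))

omit hp in
lemma y_ne_zero (hy1 : y ∘ Sum.inl ≠ 0) : y ≠ 0 := by
  intro h
  apply hy1
  funext i
  simp [h]

/-- The key linear system: the product fundamental tensor applied to the
candidate vector gives the product spray numerator. -/
lemma fund_mulVec_sprayVec (hx1 : x ∘ Sum.inl ∈ U₁) (hx2 : x ∘ Sum.inr ∈ U₂)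
    (hy1 : y ∘ Sum.inl ≠ 0) (hy2 : y ∘ Sum.inr ≠ 0) :
    fundTensor F x y *ᵥ sprayVec F₁ F₂ x y = fun β => sprayNum F β x y := by
  funext β
  have hsymm := pderiv_comm (φ := f) (f_contDiffAt hp hx1 hx2 hy1 hy2)
  have hI2K := hp.finsler₁.pdy_spray hx1 hy1
  have hI2H := hp.finsler₂.pdy_spray hx2 hy2
  cases β with
  | inl b =>
    have hI1 := hp.finsler₁.fundTensor_spray hx1 hy1 b
    unfold fundTensor at hI1
    -- LHS
    have lhs_eq : (fundTensor F x y *ᵥ sprayVec F₁ F₂ x y) (Sum.inl b) =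
        pderivS f ((F₁ (x ∘ Sum.inl) (y ∘ Sum.inl)) ^ 2)
            ((F₂ (x ∘ Sum.inr) (y ∘ Sum.inr)) ^ 2) * sprayNum F₁ b (x ∘ Sum.inl) (y ∘ Sum.inl)
        + pdy (fun a c' => (F₁ a c') ^ 2) b (x ∘ Sum.inl) (y ∘ Sum.inl) *
          (pderivS (fun u v => pderivS f u v) ((F₁ (x ∘ Sum.inl) (y ∘ Sum.inl)) ^ 2)
              ((F₂ (x ∘ Sum.inr) (y ∘ Sum.inr)) ^ 2) *
            (∑ c, pdx (fun a c' => (F₁ a c') ^ 2) c (x ∘ Sum.inl) (y ∘ Sum.inl) *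
              (y ∘ Sum.inl) c) +
          pderivS (fun u v => pderivT f u v) ((F₁ (x ∘ Sum.inl) (y ∘ Sum.inl)) ^ 2)
              ((F₂ (x ∘ Sum.inr) (y ∘ Sum.inr)) ^ 2) *
            (∑ c, pdx (fun a c' => (F₂ a c') ^ 2) c (x ∘ Sum.inr) (y ∘ Sum.inr) *
              (y ∘ Sum.inr) c)) := by
      show ∑ γ, fundTensor F x y (Sum.inl b) γ * sprayVec F₁ F₂ x y γ = _
      rw [Fintype.sum_sum_type]
      have e1 : ∑ c : Fin m, fundTensor F x y (Sum.inl b) (Sum.inl c) *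
          sprayVec F₁ F₂ x y (Sum.inl c) =
          pderivS (fun u v => pderivS f u v) ((F₁ (x ∘ Sum.inl) (y ∘ Sum.inl)) ^ 2)
              ((F₂ (x ∘ Sum.inr) (y ∘ Sum.inr)) ^ 2) *
            pdy (fun a c' => (F₁ a c') ^ 2) b (x ∘ Sum.inl) (y ∘ Sum.inl) *
            (∑ c, pdy (fun a c' => (F₁ a c') ^ 2) c (x ∘ Sum.inl) (y ∘ Sum.inl) *
              (2 * spray F₁ c (x ∘ Sum.inl) (y ∘ Sum.inl))) +
          pderivS f ((F₁ (x ∘ Sum.inl) (y ∘ Sum.inl)) ^ 2)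
              ((F₂ (x ∘ Sum.inr) (y ∘ Sum.inr)) ^ 2) *
            (∑ c, pdy (pdy (fun a c' => (F₁ a c') ^ 2) c) b (x ∘ Sum.inl) (y ∘ Sum.inl) *
              (2 * spray F₁ c (x ∘ Sum.inl) (y ∘ Sum.inl))) := by
        rw [Finset.mul_sum, Finset.mul_sum, ← Finset.sum_add_distrib]
        refine Finset.sum_congr rfl fun c _ => ?_
        rw [show fundTensor F x y (Sum.inl b) (Sum.inl c) =
          pdy (pdy (fun x' y' => (F x' y') ^ 2) (Sum.inl c)) (Sum.inl b) x y from rfl,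
          D2 hp hx1 hx2 hy1 hy2 b c]
        simp only [sprayVec, Sum.elim_inl]
        ring
      have e2 : ∑ c : Fin n, fundTensor F x y (Sum.inl b) (Sum.inr c) *
          sprayVec F₁ F₂ x y (Sum.inr c) =
          pderivS (fun u v => pderivT f u v) ((F₁ (x ∘ Sum.inl) (y ∘ Sum.inl)) ^ 2)
              ((F₂ (x ∘ Sum.inr) (y ∘ Sum.inr)) ^ 2) *
            pdy (fun a c' => (F₁ a c') ^ 2) b (x ∘ Sum.inl) (y ∘ Sum.inl) *
            (∑ c, pdy (fun a c' => (F₂ a c') ^ 2) c (x ∘ Sum.inr) (y ∘ Sum.inr) *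
              (2 * spray F₂ c (x ∘ Sum.inr) (y ∘ Sum.inr))) := by
        rw [Finset.mul_sum]
        refine Finset.sum_congr rfl fun c _ => ?_
        rw [show fundTensor F x y (Sum.inl b) (Sum.inr c) =
          pdy (pdy (fun x' y' => (F x' y') ^ 2) (Sum.inr c)) (Sum.inl b) x y from rfl,
          D3 hp hx1 hx2 hy1 hy2 b c]
        simp only [sprayVec, Sum.elim_inr]
        ring
      rw [e1, e2, hI2K, hI2H, hI1]
      ring
    -- RHS
    have rhs_eq : sprayNum F (Sum.inl b) x y =
        pderivS f ((F₁ (x ∘ Sum.inl) (y ∘ Sum.inl)) ^ 2)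
            ((F₂ (x ∘ Sum.inr) (y ∘ Sum.inr)) ^ 2) * sprayNum F₁ b (x ∘ Sum.inl) (y ∘ Sum.inl)
        + pdy (fun a c' => (F₁ a c') ^ 2) b (x ∘ Sum.inl) (y ∘ Sum.inl) *
          (pderivS (fun u v => pderivS f u v) ((F₁ (x ∘ Sum.inl) (y ∘ Sum.inl)) ^ 2)
              ((F₂ (x ∘ Sum.inr) (y ∘ Sum.inr)) ^ 2) *
            (∑ c, pdx (fun a c' => (F₁ a c') ^ 2) c (x ∘ Sum.inl) (y ∘ Sum.inl) *
              (y ∘ Sum.inl) c) +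
          pderivT (fun u v => pderivS f u v) ((F₁ (x ∘ Sum.inl) (y ∘ Sum.inl)) ^ 2)
              ((F₂ (x ∘ Sum.inr) (y ∘ Sum.inr)) ^ 2) *
            (∑ c, pdx (fun a c' => (F₂ a c') ^ 2) c (x ∘ Sum.inr) (y ∘ Sum.inr) *
              (y ∘ Sum.inr) c)) := by
      show (∑ γ, pdx (pdy (fun x' y' => (F x' y') ^ 2) (Sum.inl b)) γ x y * y γ) -
          pdx (fun x' y' => (F x' y') ^ 2) (Sum.inl b) x y = _
      rw [Fintype.sum_sum_type]
      have e3 : ∑ c : Fin m, pdx (pdy (fun x' y' => (F x' y') ^ 2) (Sum.inl b)) (Sum.inl c)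
          x y * y (Sum.inl c) =
          pderivS (fun u v => pderivS f u v) ((F₁ (x ∘ Sum.inl) (y ∘ Sum.inl)) ^ 2)
              ((F₂ (x ∘ Sum.inr) (y ∘ Sum.inr)) ^ 2) *
            pdy (fun a c' => (F₁ a c') ^ 2) b (x ∘ Sum.inl) (y ∘ Sum.inl) *
            (∑ c, pdx (fun a c' => (F₁ a c') ^ 2) c (x ∘ Sum.inl) (y ∘ Sum.inl) *
              (y ∘ Sum.inl) c) +
          pderivS f ((F₁ (x ∘ Sum.inl) (y ∘ Sum.inl)) ^ 2)
              ((F₂ (x ∘ Sum.inr) (y ∘ Sum.inr)) ^ 2) *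
            (∑ c, pdx (pdy (fun a c' => (F₁ a c') ^ 2) b) c (x ∘ Sum.inl) (y ∘ Sum.inl) *
              (y ∘ Sum.inl) c) := by
        rw [Finset.mul_sum, Finset.mul_sum, ← Finset.sum_add_distrib]
        refine Finset.sum_congr rfl fun c _ => ?_
        rw [D6 hp hx1 hx2 hy1 hy2 b c]
        have : y (Sum.inl c) = (y ∘ Sum.inl) c := rfl
        rw [this]
        ring
      have e4 : ∑ c : Fin n, pdx (pdy (fun x' y' => (F x' y') ^ 2) (Sum.inl b)) (Sum.inr c)
          x y * y (Sum.inr c) =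
          pderivT (fun u v => pderivS f u v) ((F₁ (x ∘ Sum.inl) (y ∘ Sum.inl)) ^ 2)
              ((F₂ (x ∘ Sum.inr) (y ∘ Sum.inr)) ^ 2) *
            pdy (fun a c' => (F₁ a c') ^ 2) b (x ∘ Sum.inl) (y ∘ Sum.inl) *
            (∑ c, pdx (fun a c' => (F₂ a c') ^ 2) c (x ∘ Sum.inr) (y ∘ Sum.inr) *
              (y ∘ Sum.inr) c) := by
        rw [Finset.mul_sum]
        refine Finset.sum_congr rfl fun c _ => ?_
        rw [D7 hp hx1 hx2 hy1 hy2 b c]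
        have : y (Sum.inr c) = (y ∘ Sum.inr) c := rfl
        rw [this]
        ring
      rw [e3, e4, D5L hp hx1 hx2 hy1 hy2 b]
      unfold sprayNum
      ring
    rw [lhs_eq, rhs_eq]
    -- the two sides differ only by the order of the mixed partials of `f`
    rw [hsymm]
  | inr b =>
    have hI1 := hp.finsler₂.fundTensor_spray hx2 hy2 b
    unfold fundTensor at hI1
    have lhs_eq : (fundTensor F x y *ᵥ sprayVec F₁ F₂ x y) (Sum.inr b) =
        pderivT f ((F₁ (x ∘ Sum.inl) (y ∘ Sum.inl)) ^ 2)
            ((F₂ (x ∘ Sum.inr) (y ∘ Sum.inr)) ^ 2) * sprayNum F₂ b (x ∘ Sum.inr) (y ∘ Sum.inr)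
        + pdy (fun a c' => (F₂ a c') ^ 2) b (x ∘ Sum.inr) (y ∘ Sum.inr) *
          (pderivT (fun u v => pderivS f u v) ((F₁ (x ∘ Sum.inl) (y ∘ Sum.inl)) ^ 2)
              ((F₂ (x ∘ Sum.inr) (y ∘ Sum.inr)) ^ 2) *
            (∑ c, pdx (fun a c' => (F₁ a c') ^ 2) c (x ∘ Sum.inl) (y ∘ Sum.inl) *
              (y ∘ Sum.inl) c) +
          pderivT (fun u v => pderivT f u v) ((F₁ (x ∘ Sum.inl) (y ∘ Sum.inl)) ^ 2)
              ((F₂ (x ∘ Sum.inr) (y ∘ Sum.inr)) ^ 2) *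
            (∑ c, pdx (fun a c' => (F₂ a c') ^ 2) c (x ∘ Sum.inr) (y ∘ Sum.inr) *
              (y ∘ Sum.inr) c)) := by
      show ∑ γ, fundTensor F x y (Sum.inr b) γ * sprayVec F₁ F₂ x y γ = _
      rw [Fintype.sum_sum_type]
      have e1 : ∑ c : Fin m, fundTensor F x y (Sum.inr b) (Sum.inl c) *
          sprayVec F₁ F₂ x y (Sum.inl c) =
          pderivT (fun u v => pderivS f u v) ((F₁ (x ∘ Sum.inl) (y ∘ Sum.inl)) ^ 2)
              ((F₂ (x ∘ Sum.inr) (y ∘ Sum.inr)) ^ 2) *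
            pdy (fun a c' => (F₂ a c') ^ 2) b (x ∘ Sum.inr) (y ∘ Sum.inr) *
            (∑ c, pdy (fun a c' => (F₁ a c') ^ 2) c (x ∘ Sum.inl) (y ∘ Sum.inl) *
              (2 * spray F₁ c (x ∘ Sum.inl) (y ∘ Sum.inl))) := by
        rw [Finset.mul_sum]
        refine Finset.sum_congr rfl fun c _ => ?_
        rw [show fundTensor F x y (Sum.inr b) (Sum.inl c) =
          pdy (pdy (fun x' y' => (F x' y') ^ 2) (Sum.inl c)) (Sum.inr b) x y from rfl,
          D3' hp hx1 hx2 hy1 hy2 b c]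
        simp only [sprayVec, Sum.elim_inl]
        ring
      have e2 : ∑ c : Fin n, fundTensor F x y (Sum.inr b) (Sum.inr c) *
          sprayVec F₁ F₂ x y (Sum.inr c) =
          pderivT (fun u v => pderivT f u v) ((F₁ (x ∘ Sum.inl) (y ∘ Sum.inl)) ^ 2)
              ((F₂ (x ∘ Sum.inr) (y ∘ Sum.inr)) ^ 2) *
            pdy (fun a c' => (F₂ a c') ^ 2) b (x ∘ Sum.inr) (y ∘ Sum.inr) *
            (∑ c, pdy (fun a c' => (F₂ a c') ^ 2) c (x ∘ Sum.inr) (y ∘ Sum.inr) *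
              (2 * spray F₂ c (x ∘ Sum.inr) (y ∘ Sum.inr))) +
          pderivT f ((F₁ (x ∘ Sum.inl) (y ∘ Sum.inl)) ^ 2)
              ((F₂ (x ∘ Sum.inr) (y ∘ Sum.inr)) ^ 2) *
            (∑ c, pdy (pdy (fun a c' => (F₂ a c') ^ 2) c) b (x ∘ Sum.inr) (y ∘ Sum.inr) *
              (2 * spray F₂ c (x ∘ Sum.inr) (y ∘ Sum.inr))) := by
        rw [Finset.mul_sum, Finset.mul_sum, ← Finset.sum_add_distrib]
        refine Finset.sum_congr rfl fun c _ => ?_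
        rw [show fundTensor F x y (Sum.inr b) (Sum.inr c) =
          pdy (pdy (fun x' y' => (F x' y') ^ 2) (Sum.inr c)) (Sum.inr b) x y from rfl,
          D4 hp hx1 hx2 hy1 hy2 b c]
        simp only [sprayVec, Sum.elim_inr]
        ring
      rw [e1, e2, hI2K, hI2H, hI1]
      ring
    have rhs_eq : sprayNum F (Sum.inr b) x y =
        pderivT f ((F₁ (x ∘ Sum.inl) (y ∘ Sum.inl)) ^ 2)
            ((F₂ (x ∘ Sum.inr) (y ∘ Sum.inr)) ^ 2) * sprayNum F₂ b (x ∘ Sum.inr) (y ∘ Sum.inr)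
        + pdy (fun a c' => (F₂ a c') ^ 2) b (x ∘ Sum.inr) (y ∘ Sum.inr) *
          (pderivS (fun u v => pderivT f u v) ((F₁ (x ∘ Sum.inl) (y ∘ Sum.inl)) ^ 2)
              ((F₂ (x ∘ Sum.inr) (y ∘ Sum.inr)) ^ 2) *
            (∑ c, pdx (fun a c' => (F₁ a c') ^ 2) c (x ∘ Sum.inl) (y ∘ Sum.inl) *
              (y ∘ Sum.inl) c) +
          pderivT (fun u v => pderivT f u v) ((F₁ (x ∘ Sum.inl) (y ∘ Sum.inl)) ^ 2)
              ((F₂ (x ∘ Sum.inr) (y ∘ Sum.inr)) ^ 2) *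
            (∑ c, pdx (fun a c' => (F₂ a c') ^ 2) c (x ∘ Sum.inr) (y ∘ Sum.inr) *
              (y ∘ Sum.inr) c)) := by
      show (∑ γ, pdx (pdy (fun x' y' => (F x' y') ^ 2) (Sum.inr b)) γ x y * y γ) -
          pdx (fun x' y' => (F x' y') ^ 2) (Sum.inr b) x y = _
      rw [Fintype.sum_sum_type]
      have e3 : ∑ c : Fin m, pdx (pdy (fun x' y' => (F x' y') ^ 2) (Sum.inr b)) (Sum.inl c)
          x y * y (Sum.inl c) =
          pderivS (fun u v => pderivT f u v) ((F₁ (x ∘ Sum.inl) (y ∘ Sum.inl)) ^ 2)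
              ((F₂ (x ∘ Sum.inr) (y ∘ Sum.inr)) ^ 2) *
            pdy (fun a c' => (F₂ a c') ^ 2) b (x ∘ Sum.inr) (y ∘ Sum.inr) *
            (∑ c, pdx (fun a c' => (F₁ a c') ^ 2) c (x ∘ Sum.inl) (y ∘ Sum.inl) *
              (y ∘ Sum.inl) c) := by
        rw [Finset.mul_sum]
        refine Finset.sum_congr rfl fun c _ => ?_
        rw [D8 hp hx1 hx2 hy1 hy2 b c]
        have : y (Sum.inl c) = (y ∘ Sum.inl) c := rfl
        rw [this]
        ring
      have e4 : ∑ c : Fin n, pdx (pdy (fun x' y' => (F x' y') ^ 2) (Sum.inr b)) (Sum.inr c)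
          x y * y (Sum.inr c) =
          pderivT (fun u v => pderivT f u v) ((F₁ (x ∘ Sum.inl) (y ∘ Sum.inl)) ^ 2)
              ((F₂ (x ∘ Sum.inr) (y ∘ Sum.inr)) ^ 2) *
            pdy (fun a c' => (F₂ a c') ^ 2) b (x ∘ Sum.inr) (y ∘ Sum.inr) *
            (∑ c, pdx (fun a c' => (F₂ a c') ^ 2) c (x ∘ Sum.inr) (y ∘ Sum.inr) *
              (y ∘ Sum.inr) c) +
          pderivT f ((F₁ (x ∘ Sum.inl) (y ∘ Sum.inl)) ^ 2)
              ((F₂ (x ∘ Sum.inr) (y ∘ Sum.inr)) ^ 2) *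
            (∑ c, pdx (pdy (fun a c' => (F₂ a c') ^ 2) b) c (x ∘ Sum.inr) (y ∘ Sum.inr) *
              (y ∘ Sum.inr) c) := by
        rw [Finset.mul_sum, Finset.mul_sum, ← Finset.sum_add_distrib]
        refine Finset.sum_congr rfl fun c _ => ?_
        rw [D9 hp hx1 hx2 hy1 hy2 b c]
        have : y (Sum.inr c) = (y ∘ Sum.inr) c := rfl
        rw [this]
        ring
      rw [e3, e4, D5R hp hx1 hx2 hy1 hy2 b]
      unfold sprayNum
      ring
    rw [lhs_eq, rhs_eq]
    rw [hsymm]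

/-- Spray splitting. -/
lemma spray_split (hx1 : x ∘ Sum.inl ∈ U₁) (hx2 : x ∘ Sum.inr ∈ U₂)
    (hy1 : y ∘ Sum.inl ≠ 0) (hy2 : y ∘ Sum.inr ≠ 0) (α : Fin m ⊕ Fin n) :
    spray F α x y = (1 / 2) * sprayVec F₁ F₂ x y α := by
  have hxU : x ∈ {x' : Fin m ⊕ Fin n → ℝ | (x' ∘ Sum.inl) ∈ U₁ ∧ (x' ∘ Sum.inr) ∈ U₂} :=
    ⟨hx1, hx2⟩
  have hdet : IsUnit (fundTensor F x y).det :=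
    isUnit_iff_ne_zero.mpr (hp.finsler.posDef x hxU y (y_ne_zero hy1)).det_pos.ne'
  have hsys := fund_mulVec_sprayVec hp hx1 hx2 hy1 hy2
  have hw : (fundTensor F x y)⁻¹ *ᵥ (fun β => sprayNum F β x y) = sprayVec F₁ F₂ x y := by
    rw [← hsys, Matrix.mulVec_mulVec, Matrix.nonsing_inv_mul _ hdet, Matrix.one_mulVec]
  have : spray F α x y =
      (1 / 2) * ((fundTensor F x y)⁻¹ *ᵥ (fun β => sprayNum F β x y)) α := by
    show (1 / 2 : ℝ) * (∑ β, (fundTensor F x y)⁻¹ α β * sprayNum F β x y) = _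
    simp only [Matrix.mulVec, dotProduct]
  rw [this, hw]

lemma spray_split_inl (hx1 : x ∘ Sum.inl ∈ U₁) (hx2 : x ∘ Sum.inr ∈ U₂)
    (hy1 : y ∘ Sum.inl ≠ 0) (hy2 : y ∘ Sum.inr ≠ 0) (a : Fin m) :
    spray F (Sum.inl a) x y = spray F₁ a (x ∘ Sum.inl) (y ∘ Sum.inl) := by
  rw [spray_split hp hx1 hx2 hy1 hy2 (Sum.inl a)]
  simp [sprayVec]

lemma spray_split_inr (hx1 : x ∘ Sum.inl ∈ U₁) (hx2 : x ∘ Sum.inr ∈ U₂)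
    (hy1 : y ∘ Sum.inl ≠ 0) (hy2 : y ∘ Sum.inr ≠ 0) (a : Fin n) :
    spray F (Sum.inr a) x y = spray F₂ a (x ∘ Sum.inr) (y ∘ Sum.inr) := by
  rw [spray_split hp hx1 hx2 hy1 hy2 (Sum.inr a)]
  simp [sprayVec]

end MinkProd
end SpraySplit
section Pull

open Function Filter

variable {m n : ℕ}

lemma pdy_pull1 {S : (Fin m → ℝ) → (Fin m → ℝ) → ℝ} {x y : (Fin m ⊕ Fin n) → ℝ}
    (hS : DifferentiableAt ℝ (S (x ∘ Sum.inl)) (y ∘ Sum.inl)) (b : Fin m) :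
    pdy (fun x' y' => S (x' ∘ Sum.inl) (y' ∘ Sum.inl)) (Sum.inl b) x y =
      pdy S b (x ∘ Sum.inl) (y ∘ Sum.inl) := by
  have h : HasFDerivAt (fun y' : (Fin m ⊕ Fin n) → ℝ => S (x ∘ Sum.inl) (y' ∘ Sum.inl))
      ((fderiv ℝ (S (x ∘ Sum.inl)) (y ∘ Sum.inl)).comp (resL m n)) y :=
    hS.hasFDerivAt.comp y (resL m n).hasFDerivAt
  show fderiv ℝ _ y (Pi.single (Sum.inl b) 1) = _
  rw [h.fderiv]
  simp only [ContinuousLinearMap.comp_apply, resL_single_inl]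
  rfl

lemma pdy_pull1_inr {S : (Fin m → ℝ) → (Fin m → ℝ) → ℝ} {x y : (Fin m ⊕ Fin n) → ℝ}
    (hS : DifferentiableAt ℝ (S (x ∘ Sum.inl)) (y ∘ Sum.inl)) (b : Fin n) :
    pdy (fun x' y' => S (x' ∘ Sum.inl) (y' ∘ Sum.inl)) (Sum.inr b) x y = 0 := by
  have h : HasFDerivAt (fun y' : (Fin m ⊕ Fin n) → ℝ => S (x ∘ Sum.inl) (y' ∘ Sum.inl))
      ((fderiv ℝ (S (x ∘ Sum.inl)) (y ∘ Sum.inl)).comp (resL m n)) y :=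
    hS.hasFDerivAt.comp y (resL m n).hasFDerivAt
  show fderiv ℝ _ y (Pi.single (Sum.inr b) 1) = _
  rw [h.fderiv]
  simp only [ContinuousLinearMap.comp_apply, resL_single_inr, map_zero]

lemma pdy_pull2 {S : (Fin n → ℝ) → (Fin n → ℝ) → ℝ} {x y : (Fin m ⊕ Fin n) → ℝ}
    (hS : DifferentiableAt ℝ (S (x ∘ Sum.inr)) (y ∘ Sum.inr)) (b : Fin n) :
    pdy (fun x' y' => S (x' ∘ Sum.inr) (y' ∘ Sum.inr)) (Sum.inr b) x y =
      pdy S b (x ∘ Sum.inr) (y ∘ Sum.inr) := by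
  have h : HasFDerivAt (fun y' : (Fin m ⊕ Fin n) → ℝ => S (x ∘ Sum.inr) (y' ∘ Sum.inr))
      ((fderiv ℝ (S (x ∘ Sum.inr)) (y ∘ Sum.inr)).comp (resR m n)) y :=
    hS.hasFDerivAt.comp y (resR m n).hasFDerivAt
  show fderiv ℝ _ y (Pi.single (Sum.inr b) 1) = _
  rw [h.fderiv]
  simp only [ContinuousLinearMap.comp_apply, resR_single_inr]
  rfl

lemma pdy_pull2_inl {S : (Fin n → ℝ) → (Fin n → ℝ) → ℝ} {x y : (Fin m ⊕ Fin n) → ℝ}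
    (hS : DifferentiableAt ℝ (S (x ∘ Sum.inr)) (y ∘ Sum.inr)) (b : Fin m) :
    pdy (fun x' y' => S (x' ∘ Sum.inr) (y' ∘ Sum.inr)) (Sum.inl b) x y = 0 := by
  have h : HasFDerivAt (fun y' : (Fin m ⊕ Fin n) → ℝ => S (x ∘ Sum.inr) (y' ∘ Sum.inr))
      ((fderiv ℝ (S (x ∘ Sum.inr)) (y ∘ Sum.inr)).comp (resR m n)) y :=
    hS.hasFDerivAt.comp y (resR m n).hasFDerivAt
  show fderiv ℝ _ y (Pi.single (Sum.inl b) 1) = _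
  rw [h.fderiv]
  simp only [ContinuousLinearMap.comp_apply, resR_single_inl, map_zero]

lemma pdy_zero_local {ι : Type*} [Fintype ι] [DecidableEq ι]
    {u : (ι → ℝ) → (ι → ℝ) → ℝ} {x y : ι → ℝ} (α : ι)
    (h : ∀ᶠ p in nhds ((x, y) : (ι → ℝ) × (ι → ℝ)), u p.1 p.2 = 0) :
    pdy u α x y = 0 := by
  rw [pdy_congr (v := fun _ _ => (0:ℝ)) α (by filter_upwards [h] with p hp using hp)]
  simp [pdy]

end Pull
section Transfer

open Function Filter

variable {m n : ℕ} {U₁ : Set (Fin m → ℝ)} {U₂ : Set (Fin n → ℝ)}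
  {F₁ : (Fin m → ℝ) → (Fin m → ℝ) → ℝ} {F₂ : (Fin n → ℝ) → (Fin n → ℝ) → ℝ}
  {f : ℝ → ℝ → ℝ} {F : (Fin m ⊕ Fin n → ℝ) → (Fin m ⊕ Fin n → ℝ) → ℝ}

namespace MinkProd

variable (hp : IsMinkowskianProduct U₁ U₂ F₁ F₂ f F)
include hp

variable {x y : (Fin m ⊕ Fin n) → ℝ}

lemma A1 (hx1 : x ∘ Sum.inl ∈ U₁) (hx2 : x ∘ Sum.inr ∈ U₂)
    (hy1 : y ∘ Sum.inl ≠ 0) (hy2 : y ∘ Sum.inr ≠ 0) (a b : Fin m) :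
    pdy (spray F (Sum.inl a)) (Sum.inl b) x y =
      pdy (spray F₁ a) b (x ∘ Sum.inl) (y ∘ Sum.inl) := by
  rw [pdy_congr (v := fun x' y' => spray F₁ a (x' ∘ Sum.inl) (y' ∘ Sum.inl)) (Sum.inl b)
    (by filter_upwards [mem_goodSet_nhds hp hx1 hx2 hy1 hy2] with p hq
        exact spray_split_inl hp hq.1 hq.2.1 hq.2.2.1 hq.2.2.2 a)]
  exact pdy_pull1
    (ContDiffAt.diffY (g := spray F₁ a) (hp.finsler₁.spray_contDiffAt hx1 hy1 a)) b

lemma A2 (hx1 : x ∘ Sum.inl ∈ U₁) (hx2 : x ∘ Sum.inr ∈ U₂)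
    (hy1 : y ∘ Sum.inl ≠ 0) (hy2 : y ∘ Sum.inr ≠ 0) (a b c : Fin m) :
    pdy (pdy (spray F (Sum.inl a)) (Sum.inl b)) (Sum.inl c) x y =
      pdy (pdy (spray F₁ a) b) c (x ∘ Sum.inl) (y ∘ Sum.inl) := by
  rw [pdy_congr (v := fun x' y' => pdy (spray F₁ a) b (x' ∘ Sum.inl) (y' ∘ Sum.inl))
    (Sum.inl c)
    (by filter_upwards [mem_goodSet_nhds hp hx1 hx2 hy1 hy2] with p hq
        exact A1 hp hq.1 hq.2.1 hq.2.2.1 hq.2.2.2 a b)]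
  exact pdy_pull1 (ContDiffAt.diffY (g := pdy (spray F₁ a) b)
    (contDiffAt_pdy (g := spray F₁ a) (hp.finsler₁.spray_contDiffAt hx1 hy1 a) b)) c

lemma A2z (hx1 : x ∘ Sum.inl ∈ U₁) (hx2 : x ∘ Sum.inr ∈ U₂)
    (hy1 : y ∘ Sum.inl ≠ 0) (hy2 : y ∘ Sum.inr ≠ 0) (a b : Fin m) (c : Fin n) :
    pdy (pdy (spray F (Sum.inl a)) (Sum.inl b)) (Sum.inr c) x y = 0 := by
  rw [pdy_congr (v := fun x' y' => pdy (spray F₁ a) b (x' ∘ Sum.inl) (y' ∘ Sum.inl))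
    (Sum.inr c)
    (by filter_upwards [mem_goodSet_nhds hp hx1 hx2 hy1 hy2] with p hq
        exact A1 hp hq.1 hq.2.1 hq.2.2.1 hq.2.2.2 a b)]
  exact pdy_pull1_inr (ContDiffAt.diffY (g := pdy (spray F₁ a) b)
    (contDiffAt_pdy (g := spray F₁ a) (hp.finsler₁.spray_contDiffAt hx1 hy1 a) b)) c

lemma A3 (hx1 : x ∘ Sum.inl ∈ U₁) (hx2 : x ∘ Sum.inr ∈ U₂)
    (hy1 : y ∘ Sum.inl ≠ 0) (hy2 : y ∘ Sum.inr ≠ 0) (a b c d : Fin m) :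
    pdy (pdy (pdy (spray F (Sum.inl a)) (Sum.inl b)) (Sum.inl c)) (Sum.inl d) x y =
      pdy (pdy (pdy (spray F₁ a) b) c) d (x ∘ Sum.inl) (y ∘ Sum.inl) := by
  rw [pdy_congr (v := fun x' y' => pdy (pdy (spray F₁ a) b) c (x' ∘ Sum.inl) (y' ∘ Sum.inl))
    (Sum.inl d)
    (by filter_upwards [mem_goodSet_nhds hp hx1 hx2 hy1 hy2] with p hq
        exact A2 hp hq.1 hq.2.1 hq.2.2.1 hq.2.2.2 a b c)]
  exact pdy_pull1 (ContDiffAt.diffY (g := pdy (pdy (spray F₁ a) b) c)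
    (contDiffAt_pdy (g := pdy (spray F₁ a) b)
      (contDiffAt_pdy (g := spray F₁ a) (hp.finsler₁.spray_contDiffAt hx1 hy1 a) b) c)) d

lemma A3z (hx1 : x ∘ Sum.inl ∈ U₁) (hx2 : x ∘ Sum.inr ∈ U₂)
    (hy1 : y ∘ Sum.inl ≠ 0) (hy2 : y ∘ Sum.inr ≠ 0) (a b c : Fin m) (d : Fin n) :
    pdy (pdy (pdy (spray F (Sum.inl a)) (Sum.inl b)) (Sum.inl c)) (Sum.inr d) x y = 0 := by
  rw [pdy_congr (v := fun x' y' => pdy (pdy (spray F₁ a) b) c (x' ∘ Sum.inl) (y' ∘ Sum.inl))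
    (Sum.inr d)
    (by filter_upwards [mem_goodSet_nhds hp hx1 hx2 hy1 hy2] with p hq
        exact A2 hp hq.1 hq.2.1 hq.2.2.1 hq.2.2.2 a b c)]
  exact pdy_pull1_inr (ContDiffAt.diffY (g := pdy (pdy (spray F₁ a) b) c)
    (contDiffAt_pdy (g := pdy (spray F₁ a) b)
      (contDiffAt_pdy (g := spray F₁ a) (hp.finsler₁.spray_contDiffAt hx1 hy1 a) b) c)) d

lemma A2z_outer (hx1 : x ∘ Sum.inl ∈ U₁) (hx2 : x ∘ Sum.inr ∈ U₂)
    (hy1 : y ∘ Sum.inl ≠ 0) (hy2 : y ∘ Sum.inr ≠ 0) (a b : Fin m) (c : Fin n)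
    (α : Fin m ⊕ Fin n) :
    pdy (pdy (pdy (spray F (Sum.inl a)) (Sum.inl b)) (Sum.inr c)) α x y = 0 := by
  apply pdy_zero_local α
  filter_upwards [mem_goodSet_nhds hp hx1 hx2 hy1 hy2] with p hq
  exact A2z hp hq.1 hq.2.1 hq.2.2.1 hq.2.2.2 a b c

lemma B1 (hx1 : x ∘ Sum.inl ∈ U₁) (hx2 : x ∘ Sum.inr ∈ U₂)
    (hy1 : y ∘ Sum.inl ≠ 0) (hy2 : y ∘ Sum.inr ≠ 0) (a b : Fin n) :
    pdy (spray F (Sum.inr a)) (Sum.inr b) x y =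
      pdy (spray F₂ a) b (x ∘ Sum.inr) (y ∘ Sum.inr) := by
  rw [pdy_congr (v := fun x' y' => spray F₂ a (x' ∘ Sum.inr) (y' ∘ Sum.inr)) (Sum.inr b)
    (by filter_upwards [mem_goodSet_nhds hp hx1 hx2 hy1 hy2] with p hq
        exact spray_split_inr hp hq.1 hq.2.1 hq.2.2.1 hq.2.2.2 a)]
  exact pdy_pull2
    (ContDiffAt.diffY (g := spray F₂ a) (hp.finsler₂.spray_contDiffAt hx2 hy2 a)) b

lemma B2 (hx1 : x ∘ Sum.inl ∈ U₁) (hx2 : x ∘ Sum.inr ∈ U₂)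
    (hy1 : y ∘ Sum.inl ≠ 0) (hy2 : y ∘ Sum.inr ≠ 0) (a b c : Fin n) :
    pdy (pdy (spray F (Sum.inr a)) (Sum.inr b)) (Sum.inr c) x y =
      pdy (pdy (spray F₂ a) b) c (x ∘ Sum.inr) (y ∘ Sum.inr) := by
  rw [pdy_congr (v := fun x' y' => pdy (spray F₂ a) b (x' ∘ Sum.inr) (y' ∘ Sum.inr))
    (Sum.inr c)
    (by filter_upwards [mem_goodSet_nhds hp hx1 hx2 hy1 hy2] with p hq
        exact B1 hp hq.1 hq.2.1 hq.2.2.1 hq.2.2.2 a b)]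
  exact pdy_pull2 (ContDiffAt.diffY (g := pdy (spray F₂ a) b)
    (contDiffAt_pdy (g := spray F₂ a) (hp.finsler₂.spray_contDiffAt hx2 hy2 a) b)) c

lemma B2z (hx1 : x ∘ Sum.inl ∈ U₁) (hx2 : x ∘ Sum.inr ∈ U₂)
    (hy1 : y ∘ Sum.inl ≠ 0) (hy2 : y ∘ Sum.inr ≠ 0) (a b : Fin n) (c : Fin m) :
    pdy (pdy (spray F (Sum.inr a)) (Sum.inr b)) (Sum.inl c) x y = 0 := by
  rw [pdy_congr (v := fun x' y' => pdy (spray F₂ a) b (x' ∘ Sum.inr) (y' ∘ Sum.inr))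
    (Sum.inl c)
    (by filter_upwards [mem_goodSet_nhds hp hx1 hx2 hy1 hy2] with p hq
        exact B1 hp hq.1 hq.2.1 hq.2.2.1 hq.2.2.2 a b)]
  exact pdy_pull2_inl (ContDiffAt.diffY (g := pdy (spray F₂ a) b)
    (contDiffAt_pdy (g := spray F₂ a) (hp.finsler₂.spray_contDiffAt hx2 hy2 a) b)) c

lemma B3 (hx1 : x ∘ Sum.inl ∈ U₁) (hx2 : x ∘ Sum.inr ∈ U₂)
    (hy1 : y ∘ Sum.inl ≠ 0) (hy2 : y ∘ Sum.inr ≠ 0) (a b c d : Fin n) :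
    pdy (pdy (pdy (spray F (Sum.inr a)) (Sum.inr b)) (Sum.inr c)) (Sum.inr d) x y =
      pdy (pdy (pdy (spray F₂ a) b) c) d (x ∘ Sum.inr) (y ∘ Sum.inr) := by
  rw [pdy_congr (v := fun x' y' => pdy (pdy (spray F₂ a) b) c (x' ∘ Sum.inr) (y' ∘ Sum.inr))
    (Sum.inr d)
    (by filter_upwards [mem_goodSet_nhds hp hx1 hx2 hy1 hy2] with p hq
        exact B2 hp hq.1 hq.2.1 hq.2.2.1 hq.2.2.2 a b c)]
  exact pdy_pull2 (ContDiffAt.diffY (g := pdy (pdy (spray F₂ a) b) c)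
    (contDiffAt_pdy (g := pdy (spray F₂ a) b)
      (contDiffAt_pdy (g := spray F₂ a) (hp.finsler₂.spray_contDiffAt hx2 hy2 a) b) c)) d

lemma B3z (hx1 : x ∘ Sum.inl ∈ U₁) (hx2 : x ∘ Sum.inr ∈ U₂)
    (hy1 : y ∘ Sum.inl ≠ 0) (hy2 : y ∘ Sum.inr ≠ 0) (a b c : Fin n) (d : Fin m) :
    pdy (pdy (pdy (spray F (Sum.inr a)) (Sum.inr b)) (Sum.inr c)) (Sum.inl d) x y = 0 := by
  rw [pdy_congr (v := fun x' y' => pdy (pdy (spray F₂ a) b) c (x' ∘ Sum.inr) (y' ∘ Sum.inr))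
    (Sum.inl d)
    (by filter_upwards [mem_goodSet_nhds hp hx1 hx2 hy1 hy2] with p hq
        exact B2 hp hq.1 hq.2.1 hq.2.2.1 hq.2.2.2 a b c)]
  exact pdy_pull2_inl (ContDiffAt.diffY (g := pdy (pdy (spray F₂ a) b) c)
    (contDiffAt_pdy (g := pdy (spray F₂ a) b)
      (contDiffAt_pdy (g := spray F₂ a) (hp.finsler₂.spray_contDiffAt hx2 hy2 a) b) c)) d

lemma B2z_outer (hx1 : x ∘ Sum.inl ∈ U₁) (hx2 : x ∘ Sum.inr ∈ U₂)
    (hy1 : y ∘ Sum.inl ≠ 0) (hy2 : y ∘ Sum.inr ≠ 0) (a b : Fin n) (c : Fin m)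
    (α : Fin m ⊕ Fin n) :
    pdy (pdy (pdy (spray F (Sum.inr a)) (Sum.inr b)) (Sum.inl c)) α x y = 0 := by
  apply pdy_zero_local α
  filter_upwards [mem_goodSet_nhds hp hx1 hx2 hy1 hy2] with p hq
  exact B2z hp hq.1 hq.2.1 hq.2.2.1 hq.2.2.2 a b c

end MinkProd
end Transfer
/-- The mean Berwald curvature of a Minkowskian product Finsler metric splits:
`E_{ij} = E₁_{ij}`, `E_{i'j'} = E₂_{i'j'}`, and the mixed components vanish. -/
theorem meanBerwaldCurv_of_minkowskian_product {m n : ℕ}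
    (U₁ : Set (Fin m → ℝ)) (U₂ : Set (Fin n → ℝ))
    (F₁ : (Fin m → ℝ) → (Fin m → ℝ) → ℝ) (F₂ : (Fin n → ℝ) → (Fin n → ℝ) → ℝ)
    (f : ℝ → ℝ → ℝ) (F : (Fin m ⊕ Fin n → ℝ) → (Fin m ⊕ Fin n → ℝ) → ℝ)
    (hprod : IsMinkowskianProduct U₁ U₂ F₁ F₂ f F) :
    ∀ x : Fin m ⊕ Fin n → ℝ, (x ∘ Sum.inl) ∈ U₁ → (x ∘ Sum.inr) ∈ U₂ →
    ∀ y : Fin m ⊕ Fin n → ℝ, (y ∘ Sum.inl) ≠ 0 → (y ∘ Sum.inr) ≠ 0 →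
      (∀ i j : Fin m,
        meanBerwaldCurv F (Sum.inl i) (Sum.inl j) x y =
          meanBerwaldCurv F₁ i j (x ∘ Sum.inl) (y ∘ Sum.inl)) ∧
      (∀ i' j' : Fin n,
        meanBerwaldCurv F (Sum.inr i') (Sum.inr j') x y =
          meanBerwaldCurv F₂ i' j' (x ∘ Sum.inr) (y ∘ Sum.inr)) ∧
      (∀ (i' : Fin n) (j : Fin m),
        meanBerwaldCurv F (Sum.inr i') (Sum.inl j) x y = 0) ∧
      (∀ (i : Fin m) (j' : Fin n),
        meanBerwaldCurv F (Sum.inl i) (Sum.inr j') x y = 0) := by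
  intro x hx1 hx2 y hy1 hy2
  refine ⟨?_, ?_, ?_, ?_⟩
  · -- E_{ij} = E¹_{ij}
    intro i j
    show (1 / 2 : ℝ) * ∑ α, berwaldCurv F α (Sum.inl i) (Sum.inl j) α x y =
      (1 / 2 : ℝ) * ∑ a, berwaldCurv F₁ a i j a (x ∘ Sum.inl) (y ∘ Sum.inl)
    rw [Fintype.sum_sum_type]
    have t1 : ∑ a : Fin m, berwaldCurv F (Sum.inl a) (Sum.inl i) (Sum.inl j) (Sum.inl a) x y =
        ∑ a, berwaldCurv F₁ a i j a (x ∘ Sum.inl) (y ∘ Sum.inl) :=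
      Finset.sum_congr rfl fun a _ => MinkProd.A3 hprod hx1 hx2 hy1 hy2 a a j i
    have t2 : ∑ a : Fin n, berwaldCurv F (Sum.inr a) (Sum.inl i) (Sum.inl j) (Sum.inr a) x y =
        0 := by
      refine Finset.sum_eq_zero fun a _ => ?_
      exact MinkProd.B2z_outer hprod hx1 hx2 hy1 hy2 a a j (Sum.inl i)
    rw [t1, t2, add_zero]
  · -- E_{i'j'} = E²_{i'j'}
    intro i j
    show (1 / 2 : ℝ) * ∑ α, berwaldCurv F α (Sum.inr i) (Sum.inr j) α x y =
      (1 / 2 : ℝ) * ∑ a, berwaldCurv F₂ a i j a (x ∘ Sum.inr) (y ∘ Sum.inr)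
    rw [Fintype.sum_sum_type]
    have t1 : ∑ a : Fin m, berwaldCurv F (Sum.inl a) (Sum.inr i) (Sum.inr j) (Sum.inl a) x y =
        0 := by
      refine Finset.sum_eq_zero fun a _ => ?_
      exact MinkProd.A2z_outer hprod hx1 hx2 hy1 hy2 a a j (Sum.inr i)
    have t2 : ∑ a : Fin n, berwaldCurv F (Sum.inr a) (Sum.inr i) (Sum.inr j) (Sum.inr a) x y =
        ∑ a, berwaldCurv F₂ a i j a (x ∘ Sum.inr) (y ∘ Sum.inr) :=
      Finset.sum_congr rfl fun a _ => MinkProd.B3 hprod hx1 hx2 hy1 hy2 a a j i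
    rw [t1, t2, zero_add]
  · -- E_{i'j} = 0
    intro i j
    show (1 / 2 : ℝ) * ∑ α, berwaldCurv F α (Sum.inr i) (Sum.inl j) α x y = 0
    rw [Fintype.sum_sum_type]
    have t1 : ∑ a : Fin m, berwaldCurv F (Sum.inl a) (Sum.inr i) (Sum.inl j) (Sum.inl a) x y =
        0 := by
      refine Finset.sum_eq_zero fun a _ => ?_
      exact MinkProd.A3z hprod hx1 hx2 hy1 hy2 a a j i
    have t2 : ∑ a : Fin n, berwaldCurv F (Sum.inr a) (Sum.inr i) (Sum.inl j) (Sum.inr a) x y =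
        0 := by
      refine Finset.sum_eq_zero fun a _ => ?_
      exact MinkProd.B2z_outer hprod hx1 hx2 hy1 hy2 a a j (Sum.inr i)
    rw [t1, t2, add_zero, mul_zero]
  · -- E_{ij'} = 0
    intro i j
    show (1 / 2 : ℝ) * ∑ α, berwaldCurv F α (Sum.inl i) (Sum.inr j) α x y = 0
    rw [Fintype.sum_sum_type]
    have t1 : ∑ a : Fin m, berwaldCurv F (Sum.inl a) (Sum.inl i) (Sum.inr j) (Sum.inl a) x y =
        0 := by
      refine Finset.sum_eq_zero fun a _ => ?_
      exact MinkProd.A2z_outer hprod hx1 hx2 hy1 hy2 a a j (Sum.inl i)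
    have t2 : ∑ a : Fin n, berwaldCurv F (Sum.inr a) (Sum.inl i) (Sum.inr j) (Sum.inr a) x y =
        0 := by
      refine Finset.sum_eq_zero fun a _ => ?_
      exact MinkProd.B3z hprod hx1 hx2 hy1 hy2 a a j i
    rw [t1, t2, add_zero, mul_zero]
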